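/- arXiv:2407.08809 — 9 statements merged into one kernel-verified Lean document; each statement's English description precedes it below -/
import Mathlib

section
/- Let G be a group, let H ≤ G be a subgroup of finite index, and let K ≤ H be a subgroup that is quasi-algebraic as a subset of the group H. Then K, regarded as a subset of G, is quasi-algebraic in G. -/
/-- The solution set `V_{G,A}(S)` of a system of equations `S ⊆ F_m` over a group `G`,
relative to a subset `A ⊆ G`: tuples `(g_1, …, g_m)` such that every `s ∈ S` evaluates
into `A` under the homomorphism `F_m → G` sending the basis to the tuple. -/
def eqnSolutions {G : Type*} [Group G] (A : Set G) {m : ℕ}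
    (S : Set (FreeGroup (Fin m))) : Set (Fin m → G) :=
  {g | ∀ s ∈ S, FreeGroup.lift g s ∈ A}

/-- A subset `A` of a group `G` is quasi-algebraic if every system of equations is
equivalent (relative to `A`) to a finite subsystem. -/
def QuasiAlgebraic (G : Type*) [Group G] (A : Set G) : Prop :=
  ∀ m : ℕ, 1 ≤ m → ∀ S : Set (FreeGroup (Fin m)),
    ∃ S₀ : Finset (FreeGroup (Fin m)), ↑S₀ ⊆ S ∧
      eqnSolutions A (↑S₀ : Set (FreeGroup (Fin m))) = eqnSolutions A S

/-- A group is equationally Noetherian if `{1}` is quasi-algebraic in it. -/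
def EquationallyNoetherian (G : Type*) [Group G] : Prop :=
  QuasiAlgebraic G ({1} : Set G)

/-- Proposition: quasi-algebraicity of subgroups passes to finite extensions: if
`H ≤ G` has finite index and `K ≤ H` is quasi-algebraic in `H`, then `K`, regarded
as a subset of `G`, is quasi-algebraic in `G`. -/
theorem quasiAlgebraic_of_finiteIndex (G : Type*) [Group G] (H : Subgroup G)
    (hH : H.FiniteIndex) (K : Subgroup H)
    (hK : QuasiAlgebraic H (K : Set H)) :
    QuasiAlgebraic G ((K.map H.subtype : Subgroup G) : Set G) := by
  classical
  haveI := hH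
  intro m _hm S
  set A : Set G := ((K.map H.subtype : Subgroup G) : Set G) with hA
  set N : Subgroup G := H.normalCore with hNdef
  haveI : N.Normal := H.normalCore_normal
  haveI : N.FiniteIndex := H.finiteIndex_normalCore
  haveI : Finite (G ⧸ N) := Subgroup.finite_quotient_of_finiteIndex (H := N)
  set π : G →* G ⧸ N := QuotientGroup.mk' N with hπdef
  have hNH : N ≤ H := H.normalCore_le
  set HQ : Subgroup (G ⧸ N) := H.map π with hHQdef
  -- membership in A implies membership in H
  have hAH : ∀ x : G, x ∈ A → x ∈ H := by
    rintro x ⟨y, _, rfl⟩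
    exact y.2
  have hcomap : HQ.comap π = H := by
    rw [hHQdef, Subgroup.comap_map_eq, QuotientGroup.ker_mk', sup_eq_left.mpr hNH]
  -- key: for each "coset type" `c`, a finite subsystem controlling all tuples of type `c`
  have key : ∀ c : Fin m → G ⧸ N, ∃ T : Finset (FreeGroup (Fin m)), ↑T ⊆ S ∧
      ∀ g : Fin m → G, (∀ i, π (g i) = c i) →
        (∀ s ∈ T, FreeGroup.lift g s ∈ A) → ∀ s ∈ S, FreeGroup.lift g s ∈ A := by
    intro c
    set ψ : FreeGroup (Fin m) →* G ⧸ N := FreeGroup.lift c with hψdef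
    set L : Subgroup (FreeGroup (Fin m)) := HQ.comap ψ with hLdef
    -- `L` has finite index
    haveI : L.FiniteIndex := by
      constructor
      rw [hLdef, Subgroup.index_comap]
      exact Subgroup.index_ne_zero_of_finite
    -- the free group of finite rank is finitely generated
    haveI : Group.FG (FreeGroup (Fin m)) := by
      rw [Group.fg_iff]
      exact ⟨Set.range FreeGroup.of, FreeGroup.closure_range_of _,
        Set.finite_range _⟩
    haveI : Group.FG L := Subgroup.fg_of_index_ne_zero L
    -- a finite generating family of `L`, padded so the index type is nonempty
    obtain ⟨n, Tgen, hcard, hTgen⟩ := Group.fg_iff'.mp ‹Group.FG L›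
    set f : Fin (Tgen.card + 1) → ↥L := fun j =>
      if h : (j : ℕ) < Tgen.card then ((Tgen.equivFin.symm ⟨j, h⟩ : ↑(Tgen : Set ↥L)) : ↥L)
      else 1 with hfdef
    set β : FreeGroup (Fin (Tgen.card + 1)) →* ↥L := FreeGroup.lift f with hβdef
    have hβsurj : Function.Surjective β := by
      rw [← MonoidHom.range_eq_top]
      rw [hβdef, FreeGroup.range_lift_eq_closure]
      rw [eq_top_iff, ← hTgen]
      apply Subgroup.closure_mono
      intro x hx
      set j0 : Fin Tgen.card := Tgen.equivFin ⟨x, hx⟩ with hj0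
      refine ⟨(⟨(j0 : ℕ), j0.2.trans (Nat.lt_succ_self _)⟩ : Fin (Tgen.card + 1)), ?_⟩
      show f _ = x
      rw [hfdef]
      dsimp only
      rw [dif_pos j0.2]
      have hj : (⟨(j0 : ℕ), j0.2⟩ : Fin Tgen.card) = j0 := Fin.ext rfl
      rw [hj, hj0]
      simp
    -- the lifted system over `H`
    set Shat : Set (FreeGroup (Fin (Tgen.card + 1))) :=
      {u | ((β u : ↥L) : FreeGroup (Fin m)) ∈ S} with hShatdef
    obtain ⟨Shat₀, hShat₀sub, hShat₀eq⟩ := hK (Tgen.card + 1) (Nat.le_add_left 1 _) Shat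
    set T₁ : Finset (FreeGroup (Fin m)) :=
      Shat₀.image (fun u => ((β u : ↥L) : FreeGroup (Fin m))) with hT₁def
    set W : Finset (FreeGroup (Fin m)) :=
      if h : (S \ (L : Set (FreeGroup (Fin m)))).Nonempty then {h.choose} else ∅ with hWdef
    refine ⟨T₁ ∪ W, ?_, ?_⟩
    · intro s hs
      rcases Finset.mem_union.mp hs with hs | hs
      · obtain ⟨u, hu, rfl⟩ := Finset.mem_image.mp hs
        exact hShat₀sub hu
      · rw [hWdef] at hs
        split_ifs at hs with h
        · rw [Finset.mem_singleton.mp hs]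
          exact h.choose_spec.1
        · exact absurd hs (Finset.notMem_empty _)
    · intro g hg hT s hs
      set E : FreeGroup (Fin m) →* G := FreeGroup.lift g with hEdef
      have hcomm : π.comp E = ψ := by
        apply FreeGroup.ext_hom
        intro i
        simp only [MonoidHom.comp_apply, hEdef, hψdef, FreeGroup.lift_apply_of]
        exact hg i
      have hπE : ∀ w, π (E w) = ψ w := fun w => DFunLike.congr_fun hcomm w
      have hmemH : ∀ w ∈ L, E w ∈ H := by
        intro w hw
        rw [← hcomap]
        show π (E w) ∈ HQ
        rw [hπE]
        exact hw
      -- the evaluation homomorphism `L →* H`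
      set φ : ↥L →* ↥H :=
        (E.domRestrict L).codRestrict H (fun w => hmemH w w.2) with hφdef
      have hφcoe : ∀ w : ↥L, (φ w : G) = E (w : FreeGroup (Fin m)) := fun w => rfl
      by_cases hsL : s ∈ L
      · -- the tuple in `H` induced by `g`
        set hg' : Fin (Tgen.card + 1) → ↥H := fun j => φ (β (FreeGroup.of j)) with hg'def
        have hlift : ∀ u, FreeGroup.lift hg' u = φ (β u) := by
          intro u
          have : FreeGroup.lift hg' = φ.comp β := by
            apply FreeGroup.ext_hom
            intro j
            simp [hg'def, hβdef]
          rw [this]; rfl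
        have hsol : hg' ∈ eqnSolutions (K : Set ↥H) (↑Shat₀ : Set _) := by
          intro u hu
          rw [hlift]
          have hmemA : E ((β u : ↥L) : FreeGroup (Fin m)) ∈ A := by
            apply hT
            apply Finset.mem_union_left
            exact Finset.mem_image.mpr ⟨u, hu, rfl⟩
          obtain ⟨y, hy, hyx⟩ := hmemA
          have : φ (β u) = y := by
            apply Subtype.ext
            rw [hφcoe]
            exact hyx.symm
          rw [this]
          exact hy
        rw [hShat₀eq] at hsol
        -- pull `s` back along the surjection `β`
        obtain ⟨u, hu⟩ := hβsurj ⟨s, hsL⟩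
        have huShat : u ∈ Shat := by
          show ((β u : ↥L) : FreeGroup (Fin m)) ∈ S
          rw [hu]
          exact hs
        have := hsol u huShat
        rw [hlift, hu] at this
        exact ⟨φ ⟨s, hsL⟩, this, (hφcoe ⟨s, hsL⟩)⟩
      · -- type `c` admits no solutions at all: the witness in `W` fails
        exfalso
        have hne : (S \ (L : Set (FreeGroup (Fin m)))).Nonempty := ⟨s, hs, hsL⟩
        have hwW : hne.choose ∈ T₁ ∪ W := by
          apply Finset.mem_union_right
          rw [hWdef, dif_pos hne]
          exact Finset.mem_singleton_self _
        have hmemA : E hne.choose ∈ A := hT _ hwW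
        have : hne.choose ∈ L := by
          show ψ hne.choose ∈ HQ
          rw [← hπE]
          exact ⟨E hne.choose, hAH _ hmemA, rfl⟩
        exact hne.choose_spec.2 this
  choose T hTsub hTkey using key
  haveI : Fintype (G ⧸ N) := Fintype.ofFinite _
  refine ⟨Finset.univ.biUnion T, ?_, ?_⟩
  · intro s hs
    obtain ⟨c, _, hc⟩ := Finset.mem_biUnion.mp hs
    exact hTsub c hc
  · apply Set.Subset.antisymm
    · intro g hg s hs
      exact hTkey (fun i => π (g i)) g (fun i => rfl)
        (fun t ht => hg t (Finset.mem_biUnion.mpr ⟨_, Finset.mem_univ _, ht⟩)) s hs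
    · intro g hg s hs
      obtain ⟨c, _, hc⟩ := Finset.mem_biUnion.mp hs
      exact hg s (hTsub c hc)
end

section
/- Let G be a finitely generated group and let Z ⊴ G be a finitely generated normal subgroup that is undistorted in G and has sub-exponential growth. Then ξ(G/Z) = ξ(G), i.e. the set of exponential growth rates of the quotient G/Z equals the set of exponential growth rates of G. -/
/-- The ball of radius `k` in a group `G` with respect to a (generating) set `S`:
elements expressible as a product of at most `k` elements of `S ∪ S⁻¹`. -/
def ball {G : Type*} [Group G] (S : Set G) (k : ℕ) : Set G :=
  {g | ∃ l : List G, l.length ≤ k ∧ (∀ x ∈ l, x ∈ S ∨ x⁻¹ ∈ S) ∧ l.prod = g}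

/-- The set `ξ(G)` of exponential growth rates of `G`: real numbers `L` such that
`|B_k(G,S)|^{1/k} → L` for some finite generating set `S` of `G`. -/
noncomputable def growthRates (G : Type*) [Group G] : Set ℝ :=
  {L | ∃ S : Finset G, Subgroup.closure (S : Set G) = ⊤ ∧
    Filter.Tendsto (fun k : ℕ => ((ball (S : Set G) k).ncard : ℝ) ^ (1 / (k : ℝ)))
      Filter.atTop (nhds L)}

/-- The word length `|g|_S`: the least `k` such that `g` lies in the ball of radius `k`. -/
noncomputable def wordLength {G : Type*} [Group G] (S : Set G) (g : G) : ℕ :=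
  sInf {k | g ∈ ball S k}

/-- A finitely generated subgroup `Z ≤ G` is undistorted if, for some finite generating
sets `T` of `Z` and `S` of `G`, there is `C > 0` with `|h|_T ≤ C·(|h|_S + 1)` for all `h ∈ Z`. -/
def Undistorted {G : Type*} [Group G] (Z : Subgroup G) : Prop :=
  ∃ T : Finset Z, Subgroup.closure (T : Set Z) = ⊤ ∧
    ∃ S : Finset G, Subgroup.closure (S : Set G) = ⊤ ∧
      ∃ C : ℝ, 0 < C ∧ ∀ h : Z,
        (wordLength (T : Set Z) h : ℝ) ≤ C * ((wordLength (S : Set G) (h : G) : ℝ) + 1)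

/-- A group `Z` has sub-exponential growth if `|B_k(Z,T)|^{1/k} → 1` for some finite
generating set `T` of `Z`. -/
def SubExpGrowth (Z : Type*) [Group Z] : Prop :=
  ∃ T : Finset Z, Subgroup.closure (T : Set Z) = ⊤ ∧
    Filter.Tendsto (fun k : ℕ => ((ball (T : Set Z) k).ncard : ℝ) ^ (1 / (k : ℝ)))
      Filter.atTop (nhds 1)

section AuxGrowth

variable {G H : Type*} [Group G] [Group H]

lemma one_mem_ball (S : Set G) (k : ℕ) : (1:G) ∈ ball S k :=
  ⟨[], by simp, by simp, by simp⟩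

lemma ball_mono (S : Set G) {j k : ℕ} (h : j ≤ k) : ball S j ⊆ ball S k :=
  fun _ ⟨l, hl, he, hp⟩ => ⟨l, hl.trans h, he, hp⟩

lemma ball_mono_set {S S' : Set G} (h : S ⊆ S') (k : ℕ) : ball S k ⊆ ball S' k :=
  fun _ ⟨l, hl, he, hp⟩ => ⟨l, hl, fun x hx => (he x hx).imp (@h x) (@h x⁻¹), hp⟩

lemma mul_mem_ball {S : Set G} {a b : G} {j k : ℕ} (ha : a ∈ ball S j) (hb : b ∈ ball S k) :
    a * b ∈ ball S (j + k) := by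
  obtain ⟨l, hl, he, hp⟩ := ha
  obtain ⟨m, hm, hme, hmp⟩ := hb
  exact ⟨l ++ m, by simpa using Nat.add_le_add hl hm,
    fun x hx => (List.mem_append.1 hx).elim (he x) (hme x), by simp [hp, hmp]⟩

lemma inv_mem_ball {S : Set G} {a : G} {k : ℕ} (ha : a ∈ ball S k) : a⁻¹ ∈ ball S k := by
  obtain ⟨l, hl, he, hp⟩ := ha
  refine ⟨(l.map Inv.inv).reverse, by simpa using hl, ?_, ?_⟩
  · intro x hx
    simp only [List.mem_reverse, List.mem_map] at hx
    obtain ⟨y, hy, rfl⟩ := hx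
    exact (he y hy).symm.imp (by simp) (by simpa using id)
  · rw [← hp, ← List.prod_inv_reverse]

lemma mem_ball_single {S : Set G} {s : G} (hs : s ∈ S ∨ s⁻¹ ∈ S) : s ∈ ball S 1 :=
  ⟨[s], by simp, by simpa using hs, by simp⟩

lemma ball_finite (S : Finset G) (k : ℕ) : (ball (S : Set G) k).Finite := by
  induction k with
  | zero =>
    apply Set.Finite.subset (Set.finite_singleton (1:G))
    rintro g ⟨l, hl, -, rfl⟩
    simp only [Nat.le_zero, List.length_eq_zero_iff] at hl
    simp [hl]
  | succ k ih =>
    have hfin : ((S : Set G) ∪ (S : Set G)⁻¹).Finite := S.finite_toSet.union S.finite_toSet.inv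
    apply Set.Finite.subset (ih.union (hfin.biUnion (fun s _ => ih.image (s * ·))))
    rintro g ⟨l, hl, he, rfl⟩
    match l with
    | [] => exact Or.inl (one_mem_ball _ _)
    | x :: t =>
      have hx : x ∈ (S : Set G) ∪ (S : Set G)⁻¹ := by
        rcases he x (by simp) with h | h
        · exact Or.inl h
        · exact Or.inr (by simpa using h)
      exact Or.inr (Set.mem_biUnion hx
        ⟨t.prod, ⟨t, by simpa using hl, fun y hy => he y (by simp [hy]), rfl⟩, by simp⟩)

lemma exists_mem_ball_of_gen {S : Set G} (hS : Subgroup.closure S = ⊤) (g : G) :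
    ∃ k, g ∈ ball S k := by
  have hg : g ∈ Subgroup.closure S := hS ▸ Subgroup.mem_top g
  induction hg using Subgroup.closure_induction with
  | mem x hx => exact ⟨1, mem_ball_single (Or.inl hx)⟩
  | one => exact ⟨0, one_mem_ball _ _⟩
  | mul x y _ _ hx hy =>
    obtain ⟨j, hj⟩ := hx; obtain ⟨k, hk⟩ := hy
    exact ⟨j + k, mul_mem_ball hj hk⟩
  | inv x _ hx => obtain ⟨k, hk⟩ := hx; exact ⟨k, inv_mem_ball hk⟩

lemma mem_ball_wordLength {S : Set G} (hS : Subgroup.closure S = ⊤) (g : G) :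
    g ∈ ball S (wordLength S g) :=
  Nat.sInf_mem (exists_mem_ball_of_gen hS g)

lemma wordLength_le {S : Set G} {g : G} {k : ℕ} (h : g ∈ ball S k) : wordLength S g ≤ k :=
  Nat.sInf_le h

lemma list_prod_mem_ball {S : Set G} {M : ℕ} {l : List G}
    (h : ∀ x ∈ l, x ∈ ball S M) : l.prod ∈ ball S (l.length * M) := by
  induction l with
  | nil => exact one_mem_ball _ _
  | cons x t ih =>
    have := mul_mem_ball (h x (by simp)) (ih (fun y hy => h y (by simp [hy])))
    simpa [List.length_cons, Nat.succ_mul, Nat.add_comm] using this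

/-- comparison of word metrics for two finite generating sets -/
lemma wordLength_comparison (S S' : Finset G) (hS : Subgroup.closure (S : Set G) = ⊤)
    (hS' : Subgroup.closure (S' : Set G) = ⊤) :
    ∃ M : ℕ, ∀ g : G, wordLength (S' : Set G) g ≤ M * wordLength (S : Set G) g := by
  classical
  set M := S.sup (fun s => wordLength (S' : Set G) s) with hM
  refine ⟨M, fun g => ?_⟩
  obtain ⟨l, hl, he, hp⟩ := mem_ball_wordLength hS g
  have hball : ∀ x ∈ l, x ∈ ball (S' : Set G) M := by
    intro x hx
    rcases he x hx with h | h
    · exact ball_mono _ (Finset.le_sup h) (mem_ball_wordLength hS' x)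
    · have := ball_mono _ (Finset.le_sup (f := fun s => wordLength (S' : Set G) s) h)
        (mem_ball_wordLength hS' x⁻¹)
      simpa using inv_mem_ball this
  have := list_prod_mem_ball hball
  rw [hp] at this
  calc wordLength (S' : Set G) g ≤ l.length * M := wordLength_le this
    _ ≤ M * wordLength (S : Set G) g := by
        rw [Nat.mul_comm]; exact Nat.mul_le_mul_left M hl

lemma map_ball (f : G →* H) (S : Set G) (k : ℕ) :
    f '' ball S k = ball (f '' S) k := by
  ext h
  constructor
  · rintro ⟨g, ⟨l, hl, he, rfl⟩, rfl⟩
    refine ⟨l.map f, by simpa using hl, ?_, List.prod_hom l f⟩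
    intro x hx
    simp only [List.mem_map] at hx
    obtain ⟨y, hy, rfl⟩ := hx
    refine (he y hy).imp (fun h => ⟨y, h, rfl⟩) (fun h => ⟨y⁻¹, h, by simp⟩)
  · rintro ⟨l, hl, he, rfl⟩
    -- lift the list
    suffices hlift : ∃ m : List G, m.length = l.length ∧ (∀ x ∈ m, x ∈ S ∨ x⁻¹ ∈ S) ∧ m.map f = l by
      obtain ⟨m, hlen, hme, hmap⟩ := hlift
      exact ⟨m.prod, ⟨m, hlen ▸ hl, hme, rfl⟩, by rw [← hmap, List.prod_hom m f]⟩
    clear hl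
    induction l with
    | nil => exact ⟨[], rfl, by simp, rfl⟩
    | cons y t ih =>
      obtain ⟨m, hlen, hme, hmap⟩ := ih (fun x hx => he x (by simp [hx]))
      rcases he y (by simp) with ⟨x, hx, rfl⟩ | ⟨x, hx, hxy⟩
      · refine ⟨x :: m, by simp [hlen], ?_, by simp [hmap]⟩
        intro z hz
        rcases List.mem_cons.1 hz with rfl | hz
        exacts [Or.inl hx, hme z hz]
      · refine ⟨x⁻¹ :: m, by simp [hlen], ?_, ?_⟩
        · intro z hz
          rcases List.mem_cons.1 hz with rfl | hz
          exacts [Or.inr (by simpa using hx), hme z hz]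
        have : f x⁻¹ = y := by rw [map_inv, hxy]; simp
        simp [hmap, this]

lemma list_prod_filter_ne_one [DecidableEq G] (l : List G) : (l.filter (fun x => x ≠ 1)).prod = l.prod := by
  induction l with
  | nil => simp
  | cons x t ih =>
    by_cases hx : x = 1
    · simpa [List.filter_cons, hx] using ih
    · rw [List.filter_cons, if_pos (by simpa using hx), List.prod_cons, List.prod_cons, ih]

lemma ball_eq_of_between {S V : Set G} (h1 : S ⊆ V) (h2 : V ⊆ insert 1 S) (k : ℕ) :
    ball V k = ball S k := by
  apply Set.Subset.antisymm _ (ball_mono_set h1 k)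
  rintro g ⟨l, hl, he, rfl⟩
  classical
  refine ⟨l.filter (fun x => x ≠ 1), le_trans (by simpa using List.length_filter_le _ l) hl, ?_,
    list_prod_filter_ne_one l⟩
  intro x hx
  rw [List.mem_filter] at hx
  obtain ⟨hxl, hx1⟩ := hx
  simp only [ne_eq, decide_not, Bool.not_eq_true', decide_eq_false_iff_not] at hx1
  rcases he x hxl with h | h
  · rcases h2 h with h | h
    · exact absurd h hx1
    · exact Or.inl h
  · rcases h2 h with h | h
    · exact absurd (by simpa using h.symm) hx1
    · exact Or.inr h

lemma ncard_prod {α β : Type*} (s : Set α) (t : Set β) :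
    (s ×ˢ t).ncard = s.ncard * t.ncard := by
  rw [← Nat.card_coe_set_eq, ← Nat.card_coe_set_eq, ← Nat.card_coe_set_eq,
    Nat.card_congr (Equiv.Set.prod s t), Nat.card_prod]

lemma ncard_ball_le_mul (Z : Subgroup G) [Z.Normal] (S : Finset G) (T0 : Finset Z) (k m : ℕ)
    (hm : ∀ h : Z, (h : G) ∈ ball (S : Set G) (k + k) → h ∈ ball (T0 : Set Z) m) :
    (ball (S : Set G) k).ncard ≤
      (ball ((QuotientGroup.mk' Z) '' (S : Set G)) k).ncard * (ball (T0 : Set Z) m).ncard := by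
  classical
  set π := (QuotientGroup.mk' Z) with hπ
  set A := ball (S : Set G) k with hA
  have hAfin : A.Finite := ball_finite S k
  let r : G ⧸ Z → G := fun q => if h : ∃ g ∈ A, π g = q then h.choose else 1
  have hrA : ∀ g ∈ A, r (π g) ∈ A ∧ π (r (π g)) = π g := by
    intro g hg
    have h : ∃ g' ∈ A, π g' = π g := ⟨g, hg, rfl⟩
    simp only [r, dif_pos h]
    exact ⟨h.choose_spec.1, h.choose_spec.2⟩
  set B := ball (π '' (S : Set G)) k with hB
  set Cs : Set G := Subtype.val '' ball (T0 : Set Z) m with hC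
  have hBfin : B.Finite := by
    rw [hB, ← map_ball]
    exact hAfin.image _
  have hCfin : Cs.Finite := (ball_finite T0 m).image _
  have hle : A.ncard ≤ (B ×ˢ Cs).ncard := by
    refine Set.ncard_le_ncard_of_injOn (fun g => (π g, (r (π g))⁻¹ * g)) ?_ ?_ (hBfin.prod hCfin)
    · intro g hg
      obtain ⟨hr1, hr2⟩ := hrA g hg
      constructor
      · rw [hB, ← map_ball]
        exact ⟨g, hg, rfl⟩
      · have hz : (r (π g))⁻¹ * g ∈ Z := by
          have : π ((r (π g))⁻¹ * g) = 1 := by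
            rw [map_mul, map_inv, hr2]
            simp
          exact (QuotientGroup.eq_one_iff _).1 this
        have hball : (r (π g))⁻¹ * g ∈ ball (S : Set G) (k + k) :=
          mul_mem_ball (inv_mem_ball hr1) hg
        exact ⟨⟨_, hz⟩, hm ⟨_, hz⟩ hball, rfl⟩
    · intro g hg g' hg' heq
      have h1 : π g = π g' := congrArg Prod.fst heq
      have h2 : (r (π g))⁻¹ * g = (r (π g'))⁻¹ * g' := congrArg Prod.snd heq
      rw [h1] at h2
      exact mul_left_cancel h2
  calc A.ncard ≤ (B ×ˢ Cs).ncard := hle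
    _ = B.ncard * Cs.ncard := ncard_prod _ _
    _ = B.ncard * (ball (T0 : Set Z) m).ncard := by
        rw [hC, Set.ncard_image_of_injective _ Subtype.val_injective]

open Filter Topology in
lemma tendsto_sub_rpow {c : ℕ → ℝ} (hc1 : ∀ j, 1 ≤ c j)
    (hc : Tendsto (fun j : ℕ => c j ^ (1 / (j : ℝ))) atTop (nhds 1))
    (m : ℕ → ℕ) (hmt : Tendsto m atTop atTop) (B : ℝ)
    (hmB : ∀ᶠ k : ℕ in atTop, (m k : ℝ) ≤ B * k) :
    Tendsto (fun k : ℕ => c (m k) ^ (1 / (k : ℝ))) atTop (nhds 1) := by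
  have hcomp : Tendsto (fun k : ℕ => (c (m k) ^ (1 / (m k : ℝ))) ^ B) atTop (nhds 1) := by
    have h1 : Tendsto (fun k : ℕ => c (m k) ^ (1 / (m k : ℝ))) atTop (nhds 1) := hc.comp hmt
    have := h1.rpow_const (p := B) (Or.inl one_ne_zero)
    simpa using this
  have hlow : Tendsto (fun _ : ℕ => (1 : ℝ)) atTop (nhds 1) := tendsto_const_nhds
  refine tendsto_of_tendsto_of_tendsto_of_le_of_le' hlow hcomp ?_ ?_
  · filter_upwards [eventually_ge_atTop 1] with k hk
    exact Real.one_le_rpow (hc1 (m k)) (by positivity)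
  · filter_upwards [eventually_ge_atTop 1, hmt.eventually_ge_atTop 1, hmB] with k hk hmk hB
    have hk0 : (0 : ℝ) < k := by exact_mod_cast hk
    have hmk0 : (0 : ℝ) < (m k : ℝ) := by exact_mod_cast hmk
    have key : c (m k) ^ (1 / (k : ℝ)) = (c (m k) ^ (1 / (m k : ℝ))) ^ ((m k : ℝ) / k) := by
      rw [← Real.rpow_mul (le_trans zero_le_one (hc1 (m k)))]
      congr 1
      field_simp
    rw [key]
    apply Real.rpow_le_rpow_of_exponent_le
    · exact Real.one_le_rpow (hc1 (m k)) (by positivity)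
    · rw [div_le_iff₀ hk0]
      exact hB

open Filter Topology in
lemma growth_squeeze {A B E : ℕ → ℝ} (hB1 : ∀ k, 1 ≤ B k) (hBA : ∀ k, B k ≤ A k)
    (hABE : ∀ k, A k ≤ B k * E k) (hE1 : ∀ k, 1 ≤ E k)
    (hE : Tendsto (fun k : ℕ => E k ^ (1 / (k : ℝ))) atTop (nhds 1)) (L : ℝ) :
    Tendsto (fun k : ℕ => B k ^ (1 / (k : ℝ))) atTop (nhds L) ↔
      Tendsto (fun k : ℕ => A k ^ (1 / (k : ℝ))) atTop (nhds L) := by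
  set f := fun k : ℕ => A k ^ (1 / (k : ℝ))
  set g := fun k : ℕ => B k ^ (1 / (k : ℝ))
  set d := fun k : ℕ => E k ^ (1 / (k : ℝ))
  have hB0 : ∀ k, (0:ℝ) ≤ B k := fun k => le_trans zero_le_one (hB1 k)
  have hE0 : ∀ k, (0:ℝ) ≤ E k := fun k => le_trans zero_le_one (hE1 k)
  have hgf : ∀ k, g k ≤ f k := fun k => Real.rpow_le_rpow (hB0 k) (hBA k) (by positivity)
  have hfgd : ∀ k, f k ≤ g k * d k := by
    intro k
    calc f k ≤ (B k * E k) ^ (1 / (k:ℝ)) :=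
          Real.rpow_le_rpow (le_trans (hB0 k) (hBA k)) (hABE k) (by positivity)
      _ = g k * d k := Real.mul_rpow (hB0 k) (hE0 k)
  have hd1 : ∀ k, (1:ℝ) ≤ d k := fun k => Real.one_le_rpow (hE1 k) (by positivity)
  have hd0 : ∀ k, (0:ℝ) < d k := fun k => lt_of_lt_of_le zero_lt_one (hd1 k)
  constructor
  · intro hg
    have hgd : Tendsto (fun k => g k * d k) atTop (nhds L) := by
      simpa using hg.mul hE
    exact tendsto_of_tendsto_of_tendsto_of_le_of_le hg hgd hgf hfgd
  · intro hf
    have hfd : Tendsto (fun k => f k / d k) atTop (nhds L) := by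
      have := hf.div hE one_ne_zero; rw [div_one] at this; exact this
    refine tendsto_of_tendsto_of_tendsto_of_le_of_le hfd hf (fun k => ?_) hgf
    rw [div_le_iff₀ (hd0 k)]
    exact hfgd k

open Filter Topology in
lemma main_sandwich (Z : Subgroup G) [Z.Normal] (T0 : Finset Z)
    (hT0 : Subgroup.closure (T0 : Set Z) = ⊤)
    (hc : Tendsto (fun k : ℕ => ((ball (T0 : Set Z) k).ncard : ℝ) ^ (1 / (k : ℝ))) atTop (nhds 1))
    (S : Finset G) (hS : Subgroup.closure (S : Set G) = ⊤) (C : ℝ) (hC : 0 < C)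
    (hdist : ∀ h : Z, (wordLength (T0 : Set Z) h : ℝ) ≤
      C * ((wordLength (S : Set G) (h : G) : ℝ) + 1)) (L : ℝ) :
    Tendsto (fun k : ℕ =>
        ((ball ((QuotientGroup.mk' Z) '' (S : Set G)) k).ncard : ℝ) ^ (1 / (k : ℝ)))
      atTop (nhds L) ↔
    Tendsto (fun k : ℕ => ((ball (S : Set G) k).ncard : ℝ) ^ (1 / (k : ℝ))) atTop (nhds L) := by
  set π := QuotientGroup.mk' Z with hπ
  set m : ℕ → ℕ := fun k => ⌈C * (2 * (k : ℝ) + 1)⌉₊ with hmdef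
  have hBfin : ∀ k, (ball (π '' (S : Set G)) k).Finite := by
    intro k
    rw [← map_ball]
    exact (ball_finite S k).image _
  have hm : ∀ k, ∀ h : Z, (h : G) ∈ ball (S : Set G) (k + k) → h ∈ ball (T0 : Set Z) (m k) := by
    intro k h hball
    have h1 : wordLength (S : Set G) (h : G) ≤ k + k := wordLength_le hball
    have h2 : (wordLength (T0 : Set Z) h : ℝ) ≤ C * (2 * (k : ℝ) + 1) := by
      refine le_trans (hdist h) ?_
      have : (wordLength (S : Set G) (h : G) : ℝ) ≤ 2 * (k : ℝ) := by
        have := (Nat.cast_le (α := ℝ)).2 h1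
        push_cast at this ⊢
        linarith
      nlinarith
    have h3 : wordLength (T0 : Set Z) h ≤ m k := by
      have h4 : (wordLength (T0 : Set Z) h : ℝ) ≤ (m k : ℝ) := le_trans h2 (Nat.le_ceil _)
      exact Nat.cast_le.1 h4
    exact ball_mono _ h3 (mem_ball_wordLength hT0 h)
  apply growth_squeeze (E := fun k => ((ball (T0 : Set Z) (m k)).ncard : ℝ))
  · intro k
    have : 0 < (ball (π '' (S : Set G)) k).ncard :=
      (Set.ncard_pos (hBfin k)).2 ⟨1, one_mem_ball _ _⟩
    exact_mod_cast this
  · intro k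
    rw [← map_ball]
    exact_mod_cast Set.ncard_image_le (ball_finite S k)
  · intro k
    have := ncard_ball_le_mul Z S T0 k (m k) (hm k)
    exact_mod_cast this
  · intro k
    have : 0 < (ball (T0 : Set Z) (m k)).ncard :=
      (Set.ncard_pos (ball_finite T0 (m k))).2 ⟨1, one_mem_ball _ _⟩
    exact_mod_cast this
  · -- E k ^ (1/k) → 1
    refine tendsto_sub_rpow (fun j => ?_) hc m ?_ (3 * C + 1) ?_
    · have : 0 < (ball (T0 : Set Z) j).ncard :=
        (Set.ncard_pos (ball_finite T0 j)).2 ⟨1, one_mem_ball _ _⟩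
      exact_mod_cast this
    · refine tendsto_atTop_atTop.2 (fun b => ⟨⌈(b : ℝ) / C⌉₊, fun k hk => ?_⟩)
      have hk' : (b : ℝ) / C ≤ k := le_trans (Nat.le_ceil _) (by exact_mod_cast hk)
      have h1 : (b : ℝ) ≤ C * (2 * (k : ℝ) + 1) := by
        rw [div_le_iff₀ hC] at hk'
        have hk0 : (0 : ℝ) ≤ k := Nat.cast_nonneg k
        nlinarith
      have h4 : (b : ℝ) ≤ (m k : ℝ) := le_trans h1 (Nat.le_ceil _)
      exact Nat.cast_le.1 h4
    · filter_upwards [eventually_ge_atTop 1] with k hk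
      have hk1 : (1 : ℝ) ≤ k := by exact_mod_cast hk
      have h0 : (0 : ℝ) ≤ C * (2 * (k : ℝ) + 1) := by positivity
      have h1 : (m k : ℝ) < C * (2 * (k : ℝ) + 1) + 1 := Nat.ceil_lt_add_one h0
      nlinarith

lemma undist_transfer (Z : Subgroup G) (T0 : Finset Z)
    (hT0 : Subgroup.closure (T0 : Set Z) = ⊤) (hund : Undistorted Z)
    (S : Finset G) (hS : Subgroup.closure (S : Set G) = ⊤) :
    ∃ C : ℝ, 0 < C ∧ ∀ h : Z,
      (wordLength (T0 : Set Z) h : ℝ) ≤ C * ((wordLength (S : Set G) (h : G) : ℝ) + 1) := by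
  obtain ⟨T, hT, S0, hS0, C0, hC0, hd⟩ := hund
  obtain ⟨M1, hM1⟩ := wordLength_comparison T T0 hT hT0
  obtain ⟨M2, hM2⟩ := wordLength_comparison S S0 hS hS0
  refine ⟨(M1 : ℝ) * C0 * ((M2 : ℝ) + 1) + 1, by positivity, fun h => ?_⟩
  have h1 : (wordLength (T0 : Set Z) h : ℝ) ≤ (M1 : ℝ) * (wordLength (T : Set Z) h : ℝ) := by
    exact_mod_cast hM1 h
  have h2 : (wordLength (T : Set Z) h : ℝ) ≤ C0 * ((wordLength (S0 : Set G) (h : G) : ℝ) + 1) :=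
    hd h
  have h3 : (wordLength (S0 : Set G) (h : G) : ℝ) ≤
      (M2 : ℝ) * (wordLength (S : Set G) (h : G) : ℝ) := by
    exact_mod_cast hM2 (h : G)
  have hw0 : (0 : ℝ) ≤ (wordLength (S : Set G) (h : G) : ℝ) := Nat.cast_nonneg _
  have hM10 : (0 : ℝ) ≤ (M1 : ℝ) := Nat.cast_nonneg _
  have hM20 : (0 : ℝ) ≤ (M2 : ℝ) := Nat.cast_nonneg _
  nlinarith [mul_le_mul_of_nonneg_left h2 hM10,
    mul_le_mul_of_nonneg_left h3 (mul_nonneg hM10 hC0.le)]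

end AuxGrowth

open Filter Topology

/-- Lemma: if `Z ⊴ G` is a finitely generated, undistorted normal subgroup of
sub-exponential growth in a finitely generated group `G`, then `ξ(G/Z) = ξ(G)`. -/
theorem growthRates_quotient_eq (G : Type*) [Group G]
    (hG : ∃ S : Finset G, Subgroup.closure (S : Set G) = ⊤)
    (Z : Subgroup G) [Z.Normal]
    (hZfg : ∃ T : Finset Z, Subgroup.closure (T : Set Z) = ⊤)
    (hund : Undistorted Z) (hsub : SubExpGrowth Z) :
    growthRates (G ⧸ Z) = growthRates G := by
  classical
  obtain ⟨T0, hT0, hc⟩ := hsub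
  set π := QuotientGroup.mk' Z with hπ
  ext L
  constructor
  · -- ξ(G/Z) ⊆ ξ(G)
    rintro ⟨Sq, hSqgen, hSqt⟩
    obtain ⟨T, hT⟩ := hZfg
    have hsurj := QuotientGroup.mk'_surjective Z
    have hout : ∀ q : G ⧸ Z, ∃ g : G, π g = q := fun q => hsurj q
    let out : G ⧸ Z → G := fun q => (hout q).choose
    have hout_eq : ∀ q, π (out q) = q := fun q => (hout q).choose_spec
    set S : Finset G := Sq.image out ∪ T.image (fun t => Z.subtype t) with hSdef
    -- π '' S sits between Sq and insert 1 Sq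
    have h1 : (Sq : Set (G ⧸ Z)) ⊆ π '' (S : Set G) := by
      intro q hq
      exact ⟨out q, by simp [hSdef]; exact Or.inl ⟨q, hq, rfl⟩, hout_eq q⟩
    have h2 : π '' (S : Set G) ⊆ insert 1 (Sq : Set (G ⧸ Z)) := by
      rintro q ⟨g, hg, rfl⟩
      simp only [hSdef, Finset.coe_union, Finset.coe_image, Set.mem_union, Set.mem_image,
        Finset.mem_coe] at hg
      rcases hg with ⟨q', hq', rfl⟩ | ⟨t, ht', rfl⟩
      · exact Or.inr (by rw [hout_eq]; exact hq')
      · left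
        exact (QuotientGroup.eq_one_iff _).2 t.2
    -- S generates G
    have hSgen : Subgroup.closure (S : Set G) = ⊤ := by
      have hZle : Z ≤ Subgroup.closure (S : Set G) := by
        have : Subgroup.map Z.subtype (Subgroup.closure (T : Set Z)) =
            Subgroup.closure (Z.subtype '' (T : Set Z)) := MonoidHom.map_closure _ _
        rw [hT] at this
        have htop : Subgroup.map Z.subtype ⊤ = Z := by
          rw [← MonoidHom.range_eq_map, Subgroup.range_subtype]
        rw [htop] at this
        rw [this]
        apply Subgroup.closure_mono
        intro x hx
        obtain ⟨t, ht', rfl⟩ := hx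
        simp only [hSdef, Finset.coe_union, Set.mem_union, Finset.coe_image, Set.mem_image,
          Finset.mem_coe]
        exact Or.inr ⟨t, ht', rfl⟩
      rw [eq_top_iff]
      intro g _
      have hq : π g ∈ Subgroup.map π (Subgroup.closure (S : Set G)) := by
        rw [MonoidHom.map_closure]
        have : Subgroup.closure (Sq : Set (G ⧸ Z)) ≤ Subgroup.closure (π '' (S : Set G)) :=
          Subgroup.closure_mono h1
        exact this (hSqgen ▸ Subgroup.mem_top (π g))
      obtain ⟨x, hx, hxg⟩ := hq
      have hone : π (x⁻¹ * g) = 1 := by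
        rw [map_mul, map_inv, hxg]
        simp
      have : x⁻¹ * g ∈ Z := (QuotientGroup.eq_one_iff _).1 hone
      have := hZle this
      have := Subgroup.mul_mem _ hx this
      simpa using this
    -- transfer tendsto to π '' S
    have hball_eq : ∀ k, ball (π '' (S : Set G)) k = ball (Sq : Set (G ⧸ Z)) k :=
      fun k => ball_eq_of_between h1 h2 k
    have hqt : Tendsto (fun k : ℕ =>
        ((ball (π '' (S : Set G)) k).ncard : ℝ) ^ (1 / (k : ℝ))) atTop (nhds L) := by
      simpa only [hball_eq] using hSqt
    obtain ⟨C, hC, hdist⟩ := undist_transfer Z T0 hT0 hund S hSgen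
    exact ⟨S, hSgen, (main_sandwich Z T0 hT0 hc S hSgen C hC hdist L).1 hqt⟩
  · -- ξ(G) ⊆ ξ(G/Z)
    rintro ⟨S, hS, ht⟩
    obtain ⟨C, hC, hdist⟩ := undist_transfer Z T0 hT0 hund S hS
    have hqt := (main_sandwich Z T0 hT0 hc S hS C hC hdist L).2 ht
    refine ⟨S.image π, ?_, ?_⟩
    · rw [Finset.coe_image, ← MonoidHom.map_closure, hS,
        Subgroup.map_top_of_surjective _ (QuotientGroup.mk'_surjective Z)]
    · simpa only [Finset.coe_image] using hqt
end

section
/- Let φ be an automorphism of the free group F_n and let T be a non-trivial aperiodic φ-aligned tree. Then the action of G_φ on T is 4-acylindrical: the only element of G_φ fixing two vertices of T at distance at least 5 is the identity. -/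
/-- The mapping torus `G_φ ≤ Aut(F_n)`: the subgroup generated by the inner
automorphisms together with `φ`. -/
def Gphi (n : ℕ) (φ : MulAut (FreeGroup (Fin n))) : Subgroup (MulAut (FreeGroup (Fin n))) :=
  Subgroup.closure
    (Set.range (MulAut.conj : FreeGroup (Fin n) →* MulAut (FreeGroup (Fin n))) ∪ {φ})

/-- A `φ`-aligned tree: a bipartite tree with an action of `G_φ`, such that (1) only the
trivial inner automorphism fixes two distinct vertices of `V₀`, and (2) there is an
injective assignment of lifts of `φ` to vertices of `V₁`, each fixing the ball of radius
one around its vertex. -/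
structure PhiAlignedTree (n : ℕ) (φ : MulAut (FreeGroup (Fin n))) where
  V : Type
  T : SimpleGraph V
  isTree : T.IsTree
  act : Gphi n φ →* Equiv.Perm V
  act_adj : ∀ (g : Gphi n φ) (u v : V), T.Adj u v → T.Adj (act g u) (act g v)
  V0 : Set V
  V1 : Set V
  cover : V0 ∪ V1 = Set.univ
  disjoint : V0 ∩ V1 = ∅
  bipartite : ∀ u v : V, T.Adj u v → (u ∈ V0 ∧ v ∈ V1) ∨ (u ∈ V1 ∧ v ∈ V0)
  inner_trivial : ∀ w1 w2 : V, w1 ∈ V0 → w2 ∈ V0 → w1 ≠ w2 →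
    ∀ g : Gphi n φ, (∃ a : FreeGroup (Fin n),
        (g : MulAut (FreeGroup (Fin n))) = MulAut.conj a) →
      act g w1 = w1 → act g w2 = w2 → g = 1
  lift : V1 → Gphi n φ
  lift_inj : Function.Injective lift
  lift_is_lift : ∀ v : V1, ∃ a : FreeGroup (Fin n),
    ((lift v : Gphi n φ) : MulAut (FreeGroup (Fin n))) = MulAut.conj a * φ
  lift_fix : ∀ v : V1, act (lift v) (v : V) = (v : V)
  lift_fix_adj : ∀ (v : V1) (u : V), T.Adj (v : V) u → act (lift v) u = u

/-- A `φ`-aligned tree is aperiodic if lifts assigned to vertices of `V₁` having equal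
`k`-th powers (for some `k ≥ 1`) must be equal. -/
def PhiAlignedTree.Aperiodic {n : ℕ} {φ : MulAut (FreeGroup (Fin n))}
    (X : PhiAlignedTree n φ) : Prop :=
  ∀ v₀ v₁ : X.V1, (∃ k : ℕ, 1 ≤ k ∧ (X.lift v₀) ^ k = (X.lift v₁) ^ k) →
    X.lift v₀ = X.lift v₁

/-- A `φ`-aligned tree is non-trivial if the `G_φ`-action has no global fixed vertex. -/
def PhiAlignedTree.Nontrivial {n : ℕ} {φ : MulAut (FreeGroup (Fin n))}
    (X : PhiAlignedTree n φ) : Prop :=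
  ¬ ∃ v : X.V, ∀ g : Gphi n φ, X.act g v = v

/- ### Auxiliary lemmas -/

private lemma myconj {G : Type*} [Group G] (α : MulAut G) (b : G) :
    α * MulAut.conj b = MulAut.conj (α b) * α := by
  ext x
  simp [MulAut.conj_apply, MulAut.mul_apply, mul_assoc]

/-- Every element of `G_φ` has the form `conj a * φ ^ k`. -/
private lemma exists_rep' {n : ℕ} {φ : MulAut (FreeGroup (Fin n))}
    (x : MulAut (FreeGroup (Fin n))) (hx : x ∈ Gphi n φ) :
    ∃ (a : FreeGroup (Fin n)) (k : ℤ), x = MulAut.conj a * φ ^ k := by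
  induction hx using Subgroup.closure_induction with
  | mem y hy =>
    rcases hy with ⟨a, rfl⟩ | hy
    · exact ⟨a, 0, by simp⟩
    · exact ⟨1, 1, by simp [Set.mem_singleton_iff.mp hy]⟩
  | one => exact ⟨1, 0, by simp⟩
  | mul y z _ _ hy hz =>
    obtain ⟨a, j, rfl⟩ := hy
    obtain ⟨b, k, rfl⟩ := hz
    refine ⟨a * (φ ^ j) b, j + k, ?_⟩
    rw [map_mul]
    calc MulAut.conj a * φ ^ j * (MulAut.conj b * φ ^ k)
        = MulAut.conj a * (φ ^ j * MulAut.conj b) * φ ^ k := by group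
      _ = MulAut.conj a * (MulAut.conj ((φ ^ j) b) * φ ^ j) * φ ^ k := by rw [myconj]
      _ = MulAut.conj a * MulAut.conj ((φ ^ j) b) * φ ^ (j + k) := by
          rw [zpow_add]; group
  | inv y _ hy =>
    obtain ⟨a, j, rfl⟩ := hy
    refine ⟨(φ ^ (-j)) a⁻¹, -j, ?_⟩
    rw [mul_inv_rev, ← map_inv, ← zpow_neg, myconj]

private lemma exists_rep {n : ℕ} {φ : MulAut (FreeGroup (Fin n))}
    (g : Gphi n φ) :
    ∃ (a : FreeGroup (Fin n)) (k : ℤ),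
      (g : MulAut (FreeGroup (Fin n))) = MulAut.conj a * φ ^ k :=
  exists_rep' g.1 g.2

private lemma lift_pow {G : Type*} [Group G] (φ : MulAut G) (h : MulAut G) (a : G)
    (hh : h = MulAut.conj a * φ) (m : ℕ) :
    ∃ b, h ^ m = MulAut.conj b * φ ^ m := by
  induction m with
  | zero => exact ⟨1, by simp⟩
  | succ m ih =>
    obtain ⟨b, hb⟩ := ih
    refine ⟨b * (φ ^ m) a, ?_⟩
    rw [pow_succ, hb, hh, map_mul]
    calc MulAut.conj b * φ ^ m * (MulAut.conj a * φ)
        = MulAut.conj b * (φ ^ m * MulAut.conj a) * φ := by group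
      _ = MulAut.conj b * (MulAut.conj ((φ ^ m) a) * φ ^ m) * φ := by rw [myconj]
      _ = MulAut.conj b * MulAut.conj ((φ ^ m) a) * φ ^ (m + 1) := by rw [pow_succ]; group

private lemma lift_zpow {G : Type*} [Group G] (φ : MulAut G) (h : MulAut G) (a : G)
    (hh : h = MulAut.conj a * φ) (k : ℤ) :
    ∃ b, h ^ k = MulAut.conj b * φ ^ k := by
  rcases k with m | m
  · obtain ⟨b, hb⟩ := lift_pow φ h a hh m
    exact ⟨b, by rw [Int.ofNat_eq_coe, zpow_natCast, zpow_natCast, hb]⟩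
  · obtain ⟨b, hb⟩ := lift_pow φ h a hh (m + 1)
    refine ⟨(φ ^ (m + 1 : ℕ))⁻¹ b⁻¹, ?_⟩
    rw [zpow_negSucc, zpow_negSucc, hb, mul_inv_rev, ← map_inv]
    exact myconj (φ ^ (m + 1 : ℕ))⁻¹ b⁻¹

private lemma getVert_map {V V' : Type*} {G : SimpleGraph V} {G' : SimpleGraph V'}
    (f : G →g G') {u v : V} (p : G.Walk u v) (i : ℕ) :
    (p.map f).getVert i = f (p.getVert i) := by
  induction p generalizing i with
  | nil => rfl
  | cons h q ih =>
    cases i with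
    | zero => simp
    | succ i => simpa [SimpleGraph.Walk.getVert_cons_succ] using ih i

private lemma support_getElem? {V : Type*} {G : SimpleGraph V} {u v : V} (p : G.Walk u v)
    (i : ℕ) (hi : i ≤ p.length) : p.support[i]? = some (p.getVert i) := by
  induction p generalizing i with
  | nil => obtain rfl : i = 0 := Nat.le_zero.mp (by simpa using hi); rfl
  | cons h q ih =>
    cases i with
    | zero => simp
    | succ i =>
      simp only [SimpleGraph.Walk.support_cons, SimpleGraph.Walk.getVert_cons_succ,
        List.getElem?_cons_succ]
      exact ih i (by simpa [SimpleGraph.Walk.length_cons] using hi)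

private lemma getVert_injOn' {V : Type*} {G : SimpleGraph V} {u v : V} {p : G.Walk u v}
    (hp : p.IsPath) {i j : ℕ} (hi : i ≤ p.length) (hj : j ≤ p.length)
    (hne : i ≠ j) : p.getVert i ≠ p.getVert j := by
  intro h
  apply hne
  have h1 := support_getElem? p i hi
  have h2 := support_getElem? p j hj
  rw [h] at h1
  have hlen : i < p.support.length := by
    rw [SimpleGraph.Walk.length_support]; omega
  exact (List.getElem?_inj hlen hp.support_nodup).mp (h1.trans h2.symm)

/-- Proposition: the action of `G_φ` on a non-trivial aperiodic `φ`-aligned tree is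
4-acylindrical: the only element fixing two vertices at distance at least 5 is the
identity. -/
theorem alignedTree_four_acylindrical (n : ℕ) (φ : MulAut (FreeGroup (Fin n)))
    (X : PhiAlignedTree n φ) (hne : X.Nontrivial) (hap : X.Aperiodic) :
    ∀ (g : Gphi n φ) (u v : X.V), 5 ≤ X.T.dist u v →
      X.act g u = u → X.act g v = v → g = 1 := by
  intro g u v hdist hu hv
  classical
  -- bipartite helpers
  have hdisj : ∀ x : X.V, x ∈ X.V0 → x ∈ X.V1 → False := by
    intro x h0 h1
    have : x ∈ X.V0 ∩ X.V1 := ⟨h0, h1⟩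
    rw [X.disjoint] at this
    exact this
  have hV01 : ∀ x y : X.V, X.T.Adj x y → x ∈ X.V0 → y ∈ X.V1 := by
    intro x y hxy hx
    rcases X.bipartite x y hxy with ⟨_, h⟩ | ⟨h, _⟩
    · exact h
    · exact absurd hx (fun hx => hdisj x hx h)
  have hV10 : ∀ x y : X.V, X.T.Adj x y → x ∈ X.V1 → y ∈ X.V0 := by
    intro x y hxy hx
    rcases X.bipartite x y hxy with ⟨h, _⟩ | ⟨_, h⟩
    · exact absurd h (fun h => hdisj x h hx)
    · exact h
  -- the path from u to v
  obtain ⟨p0⟩ := X.isTree.isConnected u v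
  set p : X.T.Walk u v := (p0.toPath : X.T.Walk u v) with hp_def
  have hp : p.IsPath := p0.toPath.2
  have hlen : 5 ≤ p.length := le_trans hdist (SimpleGraph.dist_le p)
  -- g fixes the path pointwise
  let f : X.T →g X.T := ⟨X.act g, fun h => X.act_adj g _ _ h⟩
  have hfinj : Function.Injective f := (X.act g).injective
  have hp' : ((p.map f).copy hu hv).IsPath := by
    rw [SimpleGraph.Walk.isPath_copy]
    exact SimpleGraph.Walk.map_isPath_of_injective hfinj hp
  have hpath_eq : (p.map f).copy hu hv = p :=
    (X.isTree.existsUnique_path u v).unique hp' hp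
  have hfixpath : ∀ i : ℕ, X.act g (p.getVert i) = p.getVert i := by
    intro i
    have := congrArg (fun q => SimpleGraph.Walk.getVert q i) hpath_eq
    have h2 : f (p.getVert i) = p.getVert i := by
      simpa [SimpleGraph.Walk.getVert_copy, getVert_map] using this
    exact h2
  -- fixing powers
  have hfixzpow : ∀ (h : Gphi n φ) (x : X.V), X.act h x = x → ∀ k : ℤ,
      X.act ((h ^ k)⁻¹) x = x := by
    intro h x hx k
    have h1 : Function.IsFixedPt (X.act h) x := hx
    have h2 : Function.IsFixedPt (((X.act h) ^ k : Equiv.Perm X.V)) x := h1.perm_zpow k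
    have h3 : Function.IsFixedPt ((((X.act h) ^ k)⁻¹ : Equiv.Perm X.V)) x := h2.perm_inv
    calc X.act ((h ^ k)⁻¹) x = (((X.act h) ^ k)⁻¹ : Equiv.Perm X.V) x := by
          rw [map_inv, map_zpow]
      _ = x := h3
  -- the key argument for a segment of length 4 starting in V0
  have key : ∀ j : ℕ, j + 4 ≤ p.length → p.getVert j ∈ X.V0 → g = 1 := by
    intro j hj hw0
    set w0 := p.getVert j
    set y1 := p.getVert (j + 1)
    set w1 := p.getVert (j + 2)
    set y2 := p.getVert (j + 3)
    set w2 := p.getVert (j + 4)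
    have a01 : X.T.Adj w0 y1 := p.adj_getVert_succ (by omega)
    have a12 : X.T.Adj y1 w1 := by
      have := p.adj_getVert_succ (i := j + 1) (by omega); exact this
    have a23 : X.T.Adj w1 y2 := by
      have := p.adj_getVert_succ (i := j + 2) (by omega); exact this
    have a34 : X.T.Adj y2 w2 := by
      have := p.adj_getVert_succ (i := j + 3) (by omega); exact this
    have hy1 : y1 ∈ X.V1 := hV01 _ _ a01 hw0
    have hw1 : w1 ∈ X.V0 := hV10 _ _ a12 hy1
    have hy2 : y2 ∈ X.V1 := hV01 _ _ a23 hw1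
    have hw2 : w2 ∈ X.V0 := hV10 _ _ a34 hy2
    set v1 : X.V1 := ⟨y1, hy1⟩
    set v2 : X.V1 := ⟨y2, hy2⟩
    -- fixed points of the lifts
    have l1w0 : X.act (X.lift v1) w0 = w0 := X.lift_fix_adj v1 w0 a01.symm
    have l1w1 : X.act (X.lift v1) w1 = w1 := X.lift_fix_adj v1 w1 a12
    have l2w1 : X.act (X.lift v2) w1 = w1 := X.lift_fix_adj v2 w1 a23.symm
    have l2w2 : X.act (X.lift v2) w2 = w2 := X.lift_fix_adj v2 w2 a34
    -- representation of g
    obtain ⟨a, k, hg⟩ := exists_rep g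
    -- both comparisons give g = lift^k
    have main : ∀ vv : X.V1, ∀ z1 z2 : X.V,
        z1 ∈ X.V0 → z2 ∈ X.V0 → z1 ≠ z2 →
        X.act (X.lift vv) z1 = z1 → X.act (X.lift vv) z2 = z2 →
        X.act g z1 = z1 → X.act g z2 = z2 → g = (X.lift vv) ^ k := by
      intro vv z1 z2 hz1 hz2 hz12 hl1 hl2 hg1 hg2
      obtain ⟨a1, ha1⟩ := X.lift_is_lift vv
      obtain ⟨b1, hb1⟩ := lift_zpow φ _ a1 ha1 k
      set c : Gphi n φ := g * ((X.lift vv) ^ k)⁻¹ with hc_def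
      have hcinner : ∃ a' : FreeGroup (Fin n),
          (c : MulAut (FreeGroup (Fin n))) = MulAut.conj a' := by
        refine ⟨a * b1⁻¹, ?_⟩
        have : (c : MulAut (FreeGroup (Fin n)))
            = (g : MulAut (FreeGroup (Fin n)))
              * (((X.lift vv : Gphi n φ) : MulAut (FreeGroup (Fin n))) ^ k)⁻¹ := by
          simp [hc_def]
        rw [this, hg, hb1, map_mul, map_inv, mul_inv_rev]
        group
      have hcz1 : X.act c z1 = z1 := by
        rw [hc_def, map_mul, Equiv.Perm.mul_apply, hfixzpow _ _ hl1 k, hg1]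
      have hcz2 : X.act c z2 = z2 := by
        rw [hc_def, map_mul, Equiv.Perm.mul_apply, hfixzpow _ _ hl2 k, hg2]
      have hc1 : c = 1 := X.inner_trivial z1 z2 hz1 hz2 hz12 c hcinner hcz1 hcz2
      rw [hc_def] at hc1
      exact mul_inv_eq_one.mp hc1
    have hw0w1 : w0 ≠ w1 := getVert_injOn' hp (by omega) (by omega) (by omega)
    have hw1w2 : w1 ≠ w2 := getVert_injOn' hp (by omega) (by omega) (by omega)
    have e1 : g = (X.lift v1) ^ k :=
      main v1 w0 w1 hw0 hw1 hw0w1 l1w0 l1w1 (hfixpath j) (hfixpath (j + 2))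
    have e2 : g = (X.lift v2) ^ k :=
      main v2 w1 w2 hw1 hw2 hw1w2 l2w1 l2w2 (hfixpath (j + 2)) (hfixpath (j + 4))
    by_cases hk : k = 0
    · rw [e1, hk, zpow_zero]
    · exfalso
      have heq : (X.lift v1) ^ k = (X.lift v2) ^ k := e1 ▸ e2
      have hm : 1 ≤ k.natAbs := Int.natAbs_pos.mpr hk
      have heqn : (X.lift v1) ^ (k.natAbs) = (X.lift v2) ^ (k.natAbs) := by
        rcases Int.natAbs_eq k with h | h
        · rw [h] at heq
          rw [← zpow_natCast, ← zpow_natCast (X.lift v2)]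
          exact heq
        · rw [h, zpow_neg, zpow_neg] at heq
          have := inv_injective heq
          rw [← zpow_natCast, ← zpow_natCast (X.lift v2)]
          exact this
      have hl12 : X.lift v1 = X.lift v2 := hap v1 v2 ⟨k.natAbs, hm, heqn⟩
      have hv12 : v1 = v2 := X.lift_inj hl12
      have : y1 = y2 := congrArg Subtype.val hv12
      exact getVert_injOn' hp (i := j + 1) (j := j + 3) (by omega) (by omega)
        (by omega) this
  -- choose the starting point according to the bipartition
  have h0 : p.getVert 0 ∈ X.V0 ∪ X.V1 := by rw [X.cover]; exact Set.mem_univ _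
  rcases h0 with h0 | h0
  · exact key 0 (by omega) h0
  · have a01 : X.T.Adj (p.getVert 0) (p.getVert 1) := p.adj_getVert_succ (by omega)
    exact key 1 (by omega) (hV10 _ _ a01 h0)
end

section
/- Let φ be an automorphism of the free group F_n whose outer class is neat, i.e. for every a, x ∈ F_n and every k ≥ 1, if (ad_a ∘ φ)^k(x) = x then (ad_a ∘ φ)(x) = x. Suppose ψ₁ = ad_u ∘ φ and ψ₂ = ad_v ∘ φ (with u, v ∈ F_n) satisfy ψ₁^k = ψ₂^k for some integer k ≥ 1. Then ψ₁ = ψ₂. (This is the content of the statement that if φ represents a neat outer automorphism then every φ-aligned tree is aperiodic.) -/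
open Subgroup

/-! ### Auxiliary facts about free groups -/

/-- In a free group over a subsingleton type, everything is a power of one element. -/
lemma freeGroup_subsingleton_cyclic {ι : Type*} [Subsingleton ι] :
    ∃ t : FreeGroup ι, ∀ x : FreeGroup ι, x ∈ Subgroup.zpowers t := by
  by_cases h : Nonempty ι
  · obtain ⟨i⟩ := h
    refine ⟨FreeGroup.of i, fun x => ?_⟩
    induction x using FreeGroup.induction_on with
    | C1 => exact one_mem _
    | of j => rw [Subsingleton.elim j i]; exact ⟨1, (zpow_one _).symm⟩
    | inv_of j hj => exact inv_mem hj
    | mul x y hx hy => exact mul_mem hx hy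
  · refine ⟨1, fun x => ?_⟩
    have : x.toWord = [] := by
      cases hw : x.toWord with
      | nil => rfl
      | cons p l => exact absurd ⟨p.1⟩ h
    rw [FreeGroup.toWord_eq_nil_iff] at this
    rw [this]; exact one_mem _

lemma not_commute_swaps : ¬ Commute (Equiv.swap (0 : Fin 3) 1) (Equiv.swap 1 2) := by
  intro h
  have := Equiv.ext_iff.mp h 0
  simp [Equiv.Perm.mul_apply, Equiv.swap_apply_def] at this

/-- A commutative group with a free group structure has a subsingleton generating set. -/
lemma generators_subsingleton_of_comm {G : Type*} [Group G] [IsFreeGroup G]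
    (hc : ∀ x y : G, Commute x y) : Subsingleton (IsFreeGroup.Generators G) := by
  classical
  refine ⟨fun i j => by_contra fun hij => ?_⟩
  let f : G →* Equiv.Perm (Fin 3) := IsFreeGroup.lift
    (fun x => if x = i then Equiv.swap 0 1 else if x = j then Equiv.swap 1 2 else 1)
  have h1 : f (IsFreeGroup.of i) = Equiv.swap 0 1 := by
    rw [IsFreeGroup.lift_of]; simp
  have h2 : f (IsFreeGroup.of j) = Equiv.swap 1 2 := by
    rw [IsFreeGroup.lift_of]; simp [Ne.symm hij]
  have := (hc (IsFreeGroup.of i) (IsFreeGroup.of j)).map f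
  rw [h1, h2] at this
  exact not_commute_swaps this

/-- A commutative group with a free group structure is cyclic. -/
lemma isFreeGroup_comm_cyclic {G : Type*} [Group G] [IsFreeGroup G]
    (hc : ∀ x y : G, Commute x y) : ∃ t : G, ∀ g : G, g ∈ Subgroup.zpowers t := by
  have := generators_subsingleton_of_comm hc
  obtain ⟨t', ht'⟩ := freeGroup_subsingleton_cyclic (ι := IsFreeGroup.Generators G)
  refine ⟨(IsFreeGroup.toFreeGroup G).symm t', fun g => ?_⟩
  obtain ⟨m, hm⟩ := ht' (IsFreeGroup.toFreeGroup G g)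
  exact ⟨m, by
    have := congrArg (IsFreeGroup.toFreeGroup G).symm hm
    rwa [map_zpow, MulEquiv.symm_apply_apply] at this⟩

/-- Free groups are torsion-free. -/
lemma isFreeGroup_torsionfree {G : Type*} [Group G] [IsFreeGroup G]
    (g : G) (k : ℕ) (hk : 1 ≤ k) (h : g ^ k = 1) : g = 1 := by
  set H := Subgroup.zpowers g with hH
  set gh : H := ⟨g, Subgroup.mem_zpowers g⟩ with hgh
  have hgh1 : gh ^ k = 1 := by
    ext; simp [hgh, h]
  let f : H →* Multiplicative ℤ := IsFreeGroup.lift (fun _ => Multiplicative.ofAdd (1 : ℤ))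
  have hfg : f gh = 1 := by
    have : (f gh) ^ k = 1 := by rw [← map_pow, hgh1, map_one]
    have h2 : k • (Multiplicative.toAdd (f gh)) = 0 := by
      have := congrArg Multiplicative.toAdd this
      simpa using this
    have : Multiplicative.toAdd (f gh) = 0 := by
      have hk0 : (k : ℤ) ≠ 0 := by exact_mod_cast (Nat.lt_of_lt_of_le Nat.zero_lt_one hk).ne'
      exact (smul_eq_zero.mp h2).resolve_left (by omega)
    exact Multiplicative.toAdd.injective (by simpa using this)
  have hall : ∀ x : H, f x = 1 := by
    intro x
    obtain ⟨m, hm⟩ := x.2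
    have hx : gh ^ m = x := by ext; simpa using hm
    rw [← hx, map_zpow, hfg, one_zpow]
  have hempty : IsEmpty (IsFreeGroup.Generators H) := by
    by_contra hne
    rw [not_isEmpty_iff] at hne
    obtain ⟨i⟩ := hne
    have := hall (IsFreeGroup.of i)
    rw [IsFreeGroup.lift_of] at this
    exact absurd (congrArg Multiplicative.toAdd this) (by simp)
  have : gh = 1 := by
    have hsub : Subsingleton (IsFreeGroup.Generators H) := ⟨fun a b => hempty.elim a⟩
    obtain ⟨t', ht'⟩ := freeGroup_subsingleton_cyclic (ι := IsFreeGroup.Generators H)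
    have ht'1 : t' = 1 := by
      have : t'.toWord = [] := by
        cases hw : t'.toWord with
        | nil => rfl
        | cons p l => exact hempty.elim p.1
      rwa [FreeGroup.toWord_eq_nil_iff] at this
    obtain ⟨m, hm⟩ := ht' (IsFreeGroup.toFreeGroup H gh)
    have : IsFreeGroup.toFreeGroup H gh = 1 := by rw [← hm]; simp [ht'1]
    have := congrArg (IsFreeGroup.toFreeGroup H).symm this
    rwa [MulEquiv.symm_apply_apply, map_one] at this
  exact congrArg Subtype.val this

lemma closure_pair_comm {G : Type*} [Group G] {a b : G} (hab : Commute a b)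
    {x y : G} (hx : x ∈ closure ({a, b} : Set G)) (hy : y ∈ closure ({a, b} : Set G)) :
    Commute x y := by
  induction hx, hy using closure_induction₂ with
  | mem x y hx hy =>
    rcases hx with rfl | hx <;> rcases hy with rfl | hy
    · exact Commute.refl _
    · rw [Set.mem_singleton_iff] at hy; subst hy; exact hab
    · rw [Set.mem_singleton_iff] at hx; subst hx; exact hab.symm
    · rw [Set.mem_singleton_iff] at hx hy; subst hx; subst hy; exact Commute.refl _
  | one_left x hx => exact Commute.one_left x
  | one_right x hx => exact Commute.one_right x
  | mul_left x y z _ _ _ h1 h2 => exact h1.mul_left h2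
  | mul_right y z x _ _ _ h1 h2 => exact h1.mul_right h2
  | inv_left x y _ _ h => exact h.inv_left
  | inv_right x y _ _ h => exact h.inv_right

/-- Exponent-sum homomorphism of a free group. -/
noncomputable def expSum {n : ℕ} (i : Fin n) : FreeGroup (Fin n) →* Multiplicative ℤ :=
  FreeGroup.lift (fun j => Multiplicative.ofAdd (if j = i then (1 : ℤ) else 0))

lemma expSum_of {n : ℕ} (i j : Fin n) :
    expSum i (FreeGroup.of j) = Multiplicative.ofAdd (if j = i then (1 : ℤ) else 0) :=
  FreeGroup.lift_apply_of

/-- A central element of a free group lies in the cyclic group generated by any generator. -/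
lemma mem_zpowers_of_gen {n : ℕ} (w : FreeGroup (Fin n)) (hw : ∀ x, Commute w x) (i : Fin n) :
    ∃ p : ℤ, w = (FreeGroup.of i) ^ p := by
  set a := FreeGroup.of i with ha
  set H := closure ({w, a} : Set (FreeGroup (Fin n))) with hHdef
  have hcomm : ∀ x y : H, Commute x y := by
    intro x y
    have : Commute (x : FreeGroup (Fin n)) (y : FreeGroup (Fin n)) :=
      closure_pair_comm (hw a) x.2 y.2
    exact Subtype.ext (by simpa [mul_comm] using this.eq)
  obtain ⟨t, ht⟩ := isFreeGroup_comm_cyclic hcomm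
  have hwH : w ∈ H := subset_closure (Set.mem_insert _ _)
  have haH : a ∈ H := subset_closure (Set.mem_insert_of_mem _ rfl)
  obtain ⟨p, hp⟩ := ht ⟨w, hwH⟩
  obtain ⟨q, hq⟩ := ht ⟨a, haH⟩
  have hp' : (t : FreeGroup (Fin n)) ^ p = w := by
    have := congrArg Subtype.val hp; simpa using this
  have hq' : (t : FreeGroup (Fin n)) ^ q = a := by
    have := congrArg Subtype.val hq; simpa using this
  have h1 : q * Multiplicative.toAdd (expSum i (t : FreeGroup (Fin n))) = 1 := by
    have := congrArg (fun z => Multiplicative.toAdd (expSum i z)) hq'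
    simp only [map_zpow, ha, expSum_of, if_pos rfl] at this
    simpa [toAdd_zpow, mul_comm] using this
  have hqunit : q = 1 ∨ q = -1 := Int.isUnit_iff.mp (IsUnit.of_mul_eq_one _ h1)
  rcases hqunit with rfl | rfl
  · rw [zpow_one] at hq'
    exact ⟨p, by rw [← hp', hq']⟩
  · have : (t : FreeGroup (Fin n)) = a⁻¹ := by rw [← hq']; simp
    refine ⟨-p, ?_⟩
    rw [← hp', this]
    simp [zpow_neg, inv_zpow]

/-- The centre of a free group of rank at least 2 is trivial. -/
lemma center_trivial {n : ℕ} (hn : 2 ≤ n) (w : FreeGroup (Fin n))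
    (hw : ∀ x, Commute w x) : w = 1 := by
  have h01 : (⟨0, by omega⟩ : Fin n) ≠ ⟨1, by omega⟩ := by
    intro h; exact absurd (Fin.val_eq_of_eq h) (by simp)
  obtain ⟨p, hp⟩ := mem_zpowers_of_gen w hw ⟨0, by omega⟩
  obtain ⟨m, hm⟩ := mem_zpowers_of_gen w hw ⟨1, by omega⟩
  have e1 : expSum ⟨1, by omega⟩ w = 1 := by
    rw [hp, map_zpow, expSum_of, if_neg h01]
    simp
  have e2 : expSum (⟨1, by omega⟩ : Fin n) w = Multiplicative.ofAdd m := by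
    rw [hm, map_zpow, expSum_of, if_pos rfl]
    simp [← ofAdd_zsmul]
  have : m = 0 := by
    have := e1.symm.trans e2
    simpa using (congrArg Multiplicative.toAdd this).symm
  rw [hm, this, zpow_zero]

/-! ### Cocycle calculus for twisted automorphisms -/

lemma mulaut_mul_conj {G : Type*} [Group G] (α : MulAut G) (c : G) :
    α * MulAut.conj c = MulAut.conj (α c) * α := by
  ext x
  simp [MulAut.conj_apply, mul_assoc]

/-- The cocycle `c · ψ(c) · ⋯ · ψ^(m-1)(c)`. -/
def coc {G : Type*} [Group G] (ψ : MulAut G) (c : G) : ℕ → G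
  | 0 => 1
  | m + 1 => coc ψ c m * (ψ ^ m) c

lemma coc_pow {G : Type*} [Group G] (ψ : MulAut G) (c : G) (m : ℕ) :
    (MulAut.conj c * ψ) ^ m = MulAut.conj (coc ψ c m) * ψ ^ m := by
  induction m with
  | zero => simp [coc]
  | succ m ih =>
    rw [pow_succ, ih, pow_succ, coc, map_mul]
    rw [mul_assoc, mul_assoc, ← mul_assoc (ψ ^ m) (MulAut.conj c) ψ,
      mulaut_mul_conj (ψ ^ m) c, mul_assoc]

lemma coc_apply_psi {G : Type*} [Group G] (ψ : MulAut G) (c : G) (m : ℕ) :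
    ψ (coc ψ c m) = c⁻¹ * coc ψ c m * (ψ ^ m) c := by
  induction m with
  | zero => simp [coc]
  | succ m ih =>
    simp only [coc]
    rw [map_mul, ih]
    have : ψ ((ψ ^ m) c) = (ψ ^ (m + 1)) c := by
      rw [pow_succ', MulAut.mul_apply]
    rw [this]
    simp [mul_assoc]

lemma pow_fixed {G : Type*} [Group G] (ψ : MulAut G) (c : G) (hc : ψ c = c) (m : ℕ) :
    (ψ ^ m) c = c := by
  induction m with
  | zero => rfl
  | succ j ihj => rw [pow_succ, MulAut.mul_apply, hc, ihj]

lemma coc_const {G : Type*} [Group G] (ψ : MulAut G) (c : G) (hc : ψ c = c) (m : ℕ) :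
    coc ψ c m = c ^ m := by
  induction m with
  | zero => simp [coc]
  | succ m ih =>
    simp only [coc]
    rw [ih, pow_fixed ψ c hc, pow_succ]

/-- Lemma: if the outer class of `φ` is neat, then lifts of `φ` with equal `k`-th powers
(for some `k ≥ 1`) are equal. -/
theorem neat_lift_powers_eq (n : ℕ) (φ : MulAut (FreeGroup (Fin n)))
    (hneat : ∀ (a x : FreeGroup (Fin n)) (k : ℕ), 1 ≤ k →
      ((MulAut.conj a * φ) ^ k) x = x → (MulAut.conj a * φ) x = x)
    (u v : FreeGroup (Fin n)) (k : ℕ) (hk : 1 ≤ k)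
    (h : (MulAut.conj u * φ) ^ k = (MulAut.conj v * φ) ^ k) :
    MulAut.conj u * φ = MulAut.conj v * φ := by
  set ψ₂ : MulAut (FreeGroup (Fin n)) := MulAut.conj v * φ with hψ₂
  set c : FreeGroup (Fin n) := u * v⁻¹ with hc
  have hsplit : MulAut.conj u * φ = MulAut.conj c * ψ₂ := by
    have : MulAut.conj u = MulAut.conj c * MulAut.conj v := by
      rw [← map_mul]; congr 1; rw [hc]; group
    rw [this, hψ₂, mul_assoc]
  suffices hc1 : MulAut.conj c = 1 by rw [hsplit, hc1, one_mul]
  -- the cocycle is central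
  have hck : MulAut.conj (coc ψ₂ c k) * ψ₂ ^ k = 1 * (ψ₂ ^ k) := by
    rw [← coc_pow, ← hsplit, h, one_mul]
  have hw1 : MulAut.conj (coc ψ₂ c k) = 1 := mul_right_cancel hck
  have hwcomm : ∀ x : FreeGroup (Fin n), Commute (coc ψ₂ c k) x := by
    intro x
    have hx := congrArg (fun α : MulAut (FreeGroup (Fin n)) => α x) hw1
    simp only [MulAut.conj_apply, MulAut.one_apply] at hx
    exact (mul_inv_eq_iff_eq_mul.mp hx)
  rcases Nat.lt_or_ge n 2 with hn | hn
  · -- abelian case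
    have hsub : Subsingleton (Fin n) := ⟨fun a b => Fin.ext (by omega)⟩
    obtain ⟨t, ht⟩ := freeGroup_subsingleton_cyclic (ι := Fin n)
    have hcomm : ∀ x : FreeGroup (Fin n), Commute c x := by
      intro x
      obtain ⟨p, hp⟩ := ht c
      obtain ⟨q, hq⟩ := ht x
      rw [← hp, ← hq]
      rw [Commute, SemiconjBy, ← zpow_add, ← zpow_add, add_comm]
    ext x
    simp only [MulAut.conj_apply, MulAut.one_apply]
    rw [(hcomm x).eq]
    group
  · -- centre is trivial
    have hwz : coc ψ₂ c k = 1 := center_trivial hn _ hwcomm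
    have hper : (ψ₂ ^ k) c = c := by
      have h1 := coc_apply_psi ψ₂ c k
      rw [hwz, map_one] at h1
      have : c * 1 = c * (c⁻¹ * 1 * (ψ₂ ^ k) c) := congrArg (c * ·) h1
      simpa [mul_assoc] using this.symm
    have hψ₁ : ((MulAut.conj u * φ) ^ k) c = c := by rw [h]; exact hper
    have hfix1 : (MulAut.conj u * φ) c = c := hneat u c k hk hψ₁
    have hψ₂c : ψ₂ c = c := by
      have h2 : (MulAut.conj c * ψ₂) c = c := by rw [← hsplit]; exact hfix1
      simp only [MulAut.mul_apply, MulAut.conj_apply] at h2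
      have := congrArg (fun z => c⁻¹ * z * c) h2
      simpa [mul_assoc] using this
    have hck1 : c ^ k = 1 := by rw [← coc_const ψ₂ c hψ₂c k, hwz]
    have hcone : c = 1 := isFreeGroup_torsionfree c k hk hck1
    rw [hcone, map_one]
end

section
/- Let φ be an automorphism of the free group F_n. Then φ has polynomial growth of degree 0 — that is, for every g ∈ F_n there exists B such that |φ^k(g)‾| ≤ B for all k ≥ 1 — if and only if φ has finite order in Out(F_n), i.e. φ^k = ad_a for some integer k ≥ 1 and some a ∈ F_n. -/
/-- The minimal word length of a conjugate of `g` in a free group (cyclically reduced length). -/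
noncomputable def cycNorm {n : ℕ} (g : FreeGroup (Fin n)) : ℕ :=
  sInf {m | ∃ a : FreeGroup (Fin n), (a * g * a⁻¹).norm = m}

/-- An automorphism `φ` of `F_n` is polynomially growing of degree at most `d` if for
every `g` there is `B > 0` with `|φ^k(g)‾| ≤ B·k^d` for all `k ≥ 1`. -/
def PolyGrowthDegLE {n : ℕ} (φ : MulAut (FreeGroup (Fin n))) (d : ℕ) : Prop :=
  ∀ g : FreeGroup (Fin n), ∃ B : ℝ, 0 < B ∧
    ∀ k : ℕ, 1 ≤ k → (cycNorm ((φ ^ k) g) : ℝ) ≤ B * (k : ℝ) ^ d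

section Aux


open FreeGroup List

variable {α : Type*} [DecidableEq α] {L : List (α × Bool)}

/-- A word is reduced: no adjacent cancelling pair. -/
def Rd (L : List (α × Bool)) : Prop :=
  List.Chain' (fun p q => ¬(q.1 = p.1 ∧ q.2 = !p.2)) L

theorem rd_reduce (L : List (α × Bool)) : Rd (FreeGroup.reduce L) := by
  induction L with
  | nil => simp [Rd, List.Chain']
  | cons x L ih =>
    rw [FreeGroup.reduce.cons]
    cases h : FreeGroup.reduce L with
    | nil => simp [Rd, List.Chain']
    | cons y ys =>
      rw [h] at ih
      show Rd (if x.1 = y.1 ∧ x.2 = !y.2 then ys else x :: y :: ys)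
      by_cases hc : x.1 = y.1 ∧ x.2 = !y.2
      · rw [if_pos hc]; exact ih.tail
      · rw [if_neg hc]
        exact List.isChain_cons_cons.2 ⟨fun hy => hc ⟨hy.1.symm, by simp [hy.2]⟩, ih⟩

theorem rd_toWord (x : FreeGroup α) : Rd x.toWord := by
  rw [← FreeGroup.reduce_toWord]; exact rd_reduce _

theorem Rd.reduce_eq (h : Rd L) : FreeGroup.reduce L = L := by
  induction L with
  | nil => rfl
  | cons x L ih =>
    rw [FreeGroup.reduce.cons, ih h.tail]
    cases L with
    | nil => rfl
    | cons y ys =>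
      have h1 : ¬(y.1 = x.1 ∧ y.2 = !x.2) := (List.isChain_cons_cons.1 h).1
      have h2 : ¬(x.1 = y.1 ∧ x.2 = !y.2) := by
        rintro ⟨ha, hb⟩; exact h1 ⟨ha.symm, by simp [hb]⟩
      show (if x.1 = y.1 ∧ x.2 = !y.2 then ys else x :: y :: ys) = x :: y :: ys
      rw [if_neg h2]

theorem Rd.toWord_mk (h : Rd L) : (FreeGroup.mk L).toWord = L := by
  rw [FreeGroup.toWord_mk, h.reduce_eq]

theorem Rd.norm_mk (h : Rd L) : (FreeGroup.mk L).norm = L.length := by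
  rw [FreeGroup.norm, h.toWord_mk]

/-- Cyclically reduced word. -/
def CRd (L : List (α × Bool)) : Prop :=
  Rd L ∧ ∀ p ∈ L.getLast?, ∀ q ∈ L.head?, ¬(q.1 = p.1 ∧ q.2 = !p.2)

theorem head?_flatten_replicate (m : ℕ) (L : List (α × Bool)) :
    ∀ y ∈ (List.flatten (List.replicate m L)).head?, y ∈ L.head? := by
  induction m with
  | zero => simp
  | succ m ih =>
    rw [List.replicate_succ, List.flatten_cons]
    intro y hy
    cases L with
    | nil => exact ih y hy
    | cons a l => simpa using hy

theorem CRd.rd_flatten_replicate (m : ℕ) (h : CRd L) :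
    Rd (List.flatten (List.replicate m L)) := by
  induction m with
  | zero => simp [Rd, List.Chain']
  | succ m ih =>
    rw [List.replicate_succ, List.flatten_cons]
    exact List.isChain_append.2 ⟨h.1, ih,
      fun x hx y hy => h.2 x hx y (head?_flatten_replicate m L y hy)⟩

theorem CRd.norm_pow (m : ℕ) (h : CRd L) :
    ((FreeGroup.mk L) ^ m).norm = m * L.length := by
  rw [FreeGroup.pow_mk, (h.rd_flatten_replicate m).norm_mk]
  simp [List.length_flatten, List.map_replicate, List.sum_replicate]

theorem nat_le_of_linear {A B C : ℕ} (h : ∀ m : ℕ, m * A ≤ C + m * B) : A ≤ B := by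
  by_contra hc
  push_neg at hc
  have := h (C + 1)
  nlinarith

theorem fg_norm_pow_le (x : FreeGroup α) (m : ℕ) : (x ^ m).norm ≤ m * x.norm := by
  induction m with
  | zero => simp
  | succ k ihk =>
    rw [pow_succ]
    calc (x ^ k * x).norm ≤ (x ^ k).norm + x.norm := FreeGroup.norm_mul_le _ _
      _ ≤ k * x.norm + x.norm := add_le_add_left ihk _
      _ = (k + 1) * x.norm := by ring

theorem CRd.norm_le_conj (h : CRd L) (z : FreeGroup α) :
    L.length ≤ (z * FreeGroup.mk L * z⁻¹).norm := by
  set g := FreeGroup.mk L with hg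
  have key : ∀ m : ℕ, m * L.length ≤ 2 * z.norm + m * (z * g * z⁻¹).norm := by
    intro m
    have h1 : (g ^ m).norm = m * L.length := h.norm_pow m
    have h2 : g ^ m = z⁻¹ * ((z * g * z⁻¹) ^ m) * z := by
      rw [conj_pow]; group
    calc m * L.length = (g ^ m).norm := h1.symm
      _ = (z⁻¹ * ((z * g * z⁻¹) ^ m) * z).norm := by rw [← h2]
      _ ≤ (z⁻¹ * ((z * g * z⁻¹) ^ m)).norm + z.norm := FreeGroup.norm_mul_le _ _
      _ ≤ z⁻¹.norm + ((z * g * z⁻¹) ^ m).norm + z.norm :=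
          add_le_add_left (FreeGroup.norm_mul_le _ _) _
      _ ≤ z.norm + m * (z * g * z⁻¹).norm + z.norm :=
          add_le_add_left (add_le_add (le_of_eq FreeGroup.norm_inv_eq)
            (fg_norm_pow_le (z * g * z⁻¹) m)) _
      _ = 2 * z.norm + m * (z * g * z⁻¹).norm := by ring
  exact nat_le_of_linear key

theorem Rd.invRev {L : List (α × Bool)} (h : Rd L) : Rd (FreeGroup.invRev L) := by
  unfold FreeGroup.invRev Rd List.Chain'
  rw [List.isChain_reverse, List.isChain_map]
  refine h.imp ?_
  rintro ⟨x, u⟩ ⟨y, v⟩ hxy hc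
  simp only [flip] at hc
  exact hxy ⟨hc.1.symm, by have := hc.2; simp at this; simp [this]⟩

theorem mk_single_true (x : α) : FreeGroup.mk [(x, true)] = FreeGroup.of x := rfl

theorem mk_single_false (x : α) : FreeGroup.mk [(x, false)] = (FreeGroup.of x)⁻¹ := by
  rw [← mk_single_true, FreeGroup.inv_mk]
  simp [FreeGroup.invRev]

/-- `mk [p]` as a signed generator. -/
theorem mk_single (p : α × Bool) :
    FreeGroup.mk [p] = cond p.2 (FreeGroup.of p.1) (FreeGroup.of p.1)⁻¹ := by
  obtain ⟨x, _ | _⟩ := p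
  · exact mk_single_false x
  · exact mk_single_true x


namespace CycAux

variable {n : ℕ}

theorem cycSet_nonempty (g : FreeGroup (Fin n)) :
    {m | ∃ a : FreeGroup (Fin n), (a * g * a⁻¹).norm = m}.Nonempty :=
  ⟨g.norm, 1, by simp⟩

theorem cycNorm_exists (g : FreeGroup (Fin n)) :
    ∃ z : FreeGroup (Fin n), (z * g * z⁻¹).norm = cycNorm g :=
  Nat.sInf_mem (cycSet_nonempty g)

theorem cycNorm_le_norm (g : FreeGroup (Fin n)) : cycNorm g ≤ g.norm :=
  Nat.sInf_le ⟨1, by simp⟩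

theorem cycNorm_conj (c g : FreeGroup (Fin n)) : cycNorm (c * g * c⁻¹) = cycNorm g := by
  unfold cycNorm
  congr 1
  ext m
  constructor
  · rintro ⟨u, rfl⟩
    exact ⟨u * c, by group⟩
  · rintro ⟨u, rfl⟩
    exact ⟨u * c⁻¹, by group⟩

theorem cycNorm_eq_of_isConj {g h : FreeGroup (Fin n)} (hc : IsConj g h) :
    cycNorm g = cycNorm h := by
  obtain ⟨c, rfl⟩ := isConj_iff.1 hc
  rw [cycNorm_conj]

end CycAux

namespace CycAux

open FreeGroup

theorem lemA_aux {n : ℕ} (a b : Fin n) :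
    ∀ N : ℕ, ∀ w : FreeGroup (Fin n), w.norm ≤ N →
      cycNorm (of a * w * of b * w⁻¹) ≤ 2 →
      ∃ s t : ℤ, w = of a ^ s * of b ^ t := by
  intro N
  induction N with
  | zero =>
    intro w hw _
    have hw1 : w = 1 := FreeGroup.norm_eq_zero.1 (Nat.le_zero.1 hw)
    exact ⟨0, 0, by simp [hw1]⟩
  | succ N ih =>
    intro w hw hcyc
    by_cases hnil : w.toWord = []
    · exact ⟨0, 0, by simp [FreeGroup.toWord_eq_nil_iff.1 hnil]⟩
    have hrdT : Rd w.toWord := rd_toWord w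
    have hnw : w.norm = w.toWord.length := rfl
    obtain ⟨p, tl, hPT⟩ := List.exists_cons_of_ne_nil hnil
    by_cases hpa : p.1 = a
    · -- strip a leading `a^±1`
      have hw' : w = FreeGroup.mk [p] * FreeGroup.mk tl := by
        conv_lhs => rw [← FreeGroup.mk_toWord (x := w), hPT,
          show p :: tl = [p] ++ tl from rfl]
        rw [← FreeGroup.mul_mk]
      set w' := FreeGroup.mk tl with hw'def
      have hrdtl : Rd tl := by rw [hPT] at hrdT; exact hrdT.tail
      have hlt : w'.norm ≤ N := by
        rw [hrdtl.norm_mk]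
        have : w.toWord.length ≤ N + 1 := hnw ▸ hw
        rw [hPT] at this; simpa using this
      set e := FreeGroup.mk [p] with hedef
      have hcomm : of a * e = e * of a := by
        rw [hedef, mk_single, hpa]
        cases p.2 <;> simp
      have key : of a * w * of b * w⁻¹ = e * (of a * w' * of b * w'⁻¹) * e⁻¹ := by
        calc of a * w * of b * w⁻¹
            = (of a * e) * (w' * of b * w'⁻¹) * e⁻¹ := by rw [hw']; group
          _ = (e * of a) * (w' * of b * w'⁻¹) * e⁻¹ := by rw [hcomm]
          _ = e * (of a * w' * of b * w'⁻¹) * e⁻¹ := by group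
      have hcyc' : cycNorm (of a * w' * of b * w'⁻¹) ≤ 2 := by
        rw [key, cycNorm_conj] at hcyc; exact hcyc
      obtain ⟨s, t, hst⟩ := ih w' hlt hcyc'
      refine ⟨(cond p.2 1 (-1) : ℤ) + s, t, ?_⟩
      have he2 : e = of a ^ (cond p.2 1 (-1) : ℤ) := by
        rw [hedef, mk_single, hpa]
        cases p.2 <;> simp
      rw [hw', hst, he2, ← mul_assoc, ← zpow_add]
    · by_cases hqb : (w.toWord.getLast hnil).1 = b
      · -- strip a trailing `b^±1`
        set q := w.toWord.getLast hnil with hqdef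
        have hqT : w.toWord.dropLast ++ [q] = w.toWord := List.dropLast_append_getLast hnil
        have hw' : w = FreeGroup.mk w.toWord.dropLast * FreeGroup.mk [q] := by
          conv_lhs => rw [← FreeGroup.mk_toWord (x := w), ← hqT]
          rw [← FreeGroup.mul_mk]
        set w' := FreeGroup.mk w.toWord.dropLast with hw'def
        have hrdT' : Rd w.toWord.dropLast := by
          have := hrdT
          rw [← hqT] at this
          exact (List.isChain_append.1 this).1
        have hlt : w'.norm ≤ N := by
          rw [hrdT'.norm_mk]
          have h1 : w.toWord.length ≤ N + 1 := hnw ▸ hw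
          have h2 : w.toWord.dropLast.length + 1 = w.toWord.length := by
            conv_rhs => rw [← hqT]
            simp
          omega
        set e := FreeGroup.mk [q] with hedef
        have hcomm : e * of b = of b * e := by
          rw [hedef, mk_single, hqb]
          cases q.2 <;> simp
        have key : of a * w * of b * w⁻¹ = of a * w' * of b * w'⁻¹ := by
          calc of a * w * of b * w⁻¹
              = of a * w' * (e * of b * e⁻¹) * w'⁻¹ := by rw [hw']; group
            _ = of a * w' * (of b * e * e⁻¹) * w'⁻¹ := by rw [hcomm]
            _ = of a * w' * of b * w'⁻¹ := by group
        rw [key] at hcyc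
        obtain ⟨s, t, hst⟩ := ih w' hlt hcyc
        refine ⟨s, t + (cond q.2 1 (-1) : ℤ), ?_⟩
        have he2 : e = of b ^ (cond q.2 1 (-1) : ℤ) := by
          rw [hedef, mk_single, hqb]
          cases q.2 <;> simp
        rw [hw', hst, he2, mul_assoc, ← zpow_add]
      · -- the word `a w b w⁻¹` is cyclically reduced of length ≥ 4 : contradiction
        exfalso
        set T := w.toWord with hTdef
        set q := T.getLast hnil with hqdef
        set W : List (Fin n × Bool) :=
          (([(a, true)] ++ T) ++ [(b, true)]) ++ FreeGroup.invRev T with hWdef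
        have hgW : of a * w * of b * w⁻¹ = FreeGroup.mk W := by
          conv_lhs =>
            rw [← FreeGroup.mk_toWord (x := w), ← mk_single_true a, ← mk_single_true b,
              FreeGroup.inv_mk]
          rw [← FreeGroup.mul_mk, ← FreeGroup.mul_mk, ← FreeGroup.mul_mk]
        have hlastT : T.getLast? = some q := List.getLast?_eq_getLast hnil
        have hheadT : T.head? = some p := by rw [hPT]; rfl
        have hiRnil : FreeGroup.invRev T ≠ [] := by
          intro hc
          have := congrArg List.length hc
          rw [FreeGroup.invRev_length] at this
          exact hnil (List.length_eq_zero_iff.1 this)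
        have hheadiR : (FreeGroup.invRev T).head? = some (q.1, !q.2) := by
          rw [FreeGroup.invRev, List.head?_reverse, List.getLast?_map, hlastT]; rfl
        have hlastiR : (FreeGroup.invRev T).getLast? = some (p.1, !p.2) := by
          rw [FreeGroup.invRev, List.getLast?_reverse, List.head?_map, hheadT]; rfl
        have hrdW : Rd W := by
          rw [hWdef]
          refine List.isChain_append.2 ⟨List.isChain_append.2 ⟨List.isChain_append.2
            ⟨?_, hrdT, ?_⟩, ?_, ?_⟩, hrdT.invRev, ?_⟩
          · simp [Rd]
          · -- junction (a,true) -> head T = p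
            intro x hx y hy
            simp only [List.getLast?_singleton, Option.mem_some_iff] at hx
            rw [hheadT, Option.mem_some_iff] at hy
            subst hx; subst hy
            rintro ⟨h1, -⟩; exact hpa h1
          · simp [Rd]
          · -- junction getLast T = q -> (b,true)
            intro x hx y hy
            rw [List.getLast?_append_of_ne_nil _ hnil, hlastT, Option.mem_some_iff] at hx
            simp only [List.head?_cons, Option.mem_some_iff] at hy
            subst hx; subst hy
            rintro ⟨h1, -⟩; exact hqb h1.symm
          · -- junction (b,true) -> head invRev T = (q.1, !q.2)
            intro x hx y hy
            rw [List.getLast?_append_of_ne_nil _ (by simp)] at hx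
            simp only [List.getLast?_singleton, Option.mem_some_iff] at hx
            rw [hheadiR, Option.mem_some_iff] at hy
            subst hx; subst hy
            rintro ⟨h1, -⟩; exact hqb h1
        have hcrdW : CRd W := by
          refine ⟨hrdW, ?_⟩
          intro x hx y hy
          rw [hWdef, List.getLast?_append_of_ne_nil _ hiRnil, hlastiR,
            Option.mem_some_iff] at hx
          rw [hWdef] at hy
          simp only [List.cons_append, List.head?_cons, Option.mem_some_iff] at hy
          subst hx; subst hy
          rintro ⟨h1, -⟩; exact hpa h1.symm
        obtain ⟨z, hz⟩ := cycNorm_exists (of a * w * of b * w⁻¹)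
        have hge : W.length ≤ (z * (of a * w * of b * w⁻¹) * z⁻¹).norm := by
          rw [hgW]; exact hcrdW.norm_le_conj z
        have hlen : 4 ≤ W.length := by
          rw [hWdef]
          simp only [List.length_append, List.length_singleton, FreeGroup.invRev_length]
          have : 1 ≤ T.length := List.length_pos_iff.2 hnil
          omega
        rw [hz] at hge
        omega

theorem lemA {n : ℕ} (a b : Fin n) (w : FreeGroup (Fin n))
    (h : cycNorm (of a * w * of b * w⁻¹) ≤ 2) :
    ∃ s t : ℤ, w = of a ^ s * of b ^ t :=
  lemA_aux a b w.norm w le_rfl h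

end CycAux

namespace CycAux

open FreeGroup

theorem mulAut_ext {n : ℕ} {θ₁ θ₂ : MulAut (FreeGroup (Fin n))}
    (h : ∀ i, θ₁ (of i) = θ₂ (of i)) : θ₁ = θ₂ :=
  MulEquiv.toMonoidHom_injective (FreeGroup.ext_hom _ _ h)

theorem exp_zero_of_eq {n : ℕ} {u i j : Fin n} (hui : i ≠ u) (huj : j ≠ u)
    {c s t : ℤ} (h : of u ^ c = of i ^ s * of j ^ t) : c = 0 := by
  classical
  let ν : FreeGroup (Fin n) →* Multiplicative ℤ :=
    FreeGroup.lift (fun x => if x = u then Multiplicative.ofAdd (1 : ℤ) else 1)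
  have hν := congrArg ν h
  have hu : ν (of u) = Multiplicative.ofAdd (1 : ℤ) := by simp [ν]
  have hi : ν (of i) = 1 := by simp [ν, hui]
  have hj : ν (of j) = 1 := by simp [ν, huj]
  rw [_root_.map_mul, map_zpow, map_zpow, map_zpow, hu, hi, hj] at hν
  simp only [one_zpow, mul_one] at hν
  have : (c : ℤ) * 1 = 0 := by
    have := congrArg Multiplicative.toAdd hν
    simpa using this
  simpa using this

theorem rigid {n : ℕ} (θ : MulAut (FreeGroup (Fin n)))
    (h1 : ∀ i, IsConj (θ (of i)) (of i))
    (h2 : ∀ i j, i ≠ j → IsConj (θ (of i * of j)) (of i * of j)) :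
    ∃ a, θ = MulAut.conj a := by
  cases n with
  | zero => exact ⟨1, mulAut_ext fun i => i.elim0⟩
  | succ m =>
    obtain ⟨c, hc⟩ := isConj_iff.1 (h1 0)
    set θ' := (MulAut.conj c) * θ with hθ'
    have happ : ∀ x, θ' x = c * θ x * c⁻¹ := fun x => rfl
    have hθ'0 : θ' (of 0) = of 0 := by rw [happ, hc]
    have h1' : ∀ i, IsConj (θ' (of i)) (of i) := by
      intro i
      refine IsConj.trans ?_ (h1 i)
      rw [happ]
      exact isConj_iff.2 ⟨c⁻¹, by group⟩
    have h2' : ∀ i j, i ≠ j → IsConj (θ' (of i * of j)) (of i * of j) := by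
      intro i j hij
      refine IsConj.trans ?_ (h2 i j hij)
      rw [happ]
      exact isConj_iff.2 ⟨c⁻¹, by group⟩
    have hconj : ∀ i : Fin (m + 1), i ≠ 0 →
        ∃ s : ℤ, θ' (of i) = of 0 ^ s * of i * of 0 ^ (-s) := by
      intro i hi
      obtain ⟨d, hd⟩ := isConj_iff.1 (h1' i)
      have hb : θ' (of i) = d⁻¹ * of i * d⁻¹⁻¹ := by
        conv_rhs => rw [← hd]
        group
      have e1 : of 0 * d⁻¹ * of i * d⁻¹⁻¹ = θ' (of 0 * of i) := by
        rw [θ'.map_mul, hθ'0, hb]; group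
      have hbound : cycNorm (of 0 * d⁻¹ * of i * d⁻¹⁻¹) ≤ 2 := by
        rw [e1, cycNorm_eq_of_isConj (h2' 0 i (Ne.symm hi))]
        refine (cycNorm_le_norm _).trans ?_
        refine (FreeGroup.norm_mul_le _ _).trans ?_
        simp [FreeGroup.norm_of]
      obtain ⟨s, t, hst⟩ := lemA 0 i d⁻¹ hbound
      refine ⟨s, ?_⟩
      rw [hb, hst]
      group
    choose S hS using hconj
    have pair : ∀ i j (hi : i ≠ 0) (hj : j ≠ 0), i ≠ j → S i hi = S j hj := by
      intro i j hi hj hij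
      set si := S i hi with hsi
      set sj := S j hj with hsj
      have hti := hS i hi
      have htj := hS j hj
      have e1 : of i * of 0 ^ (sj - si) * of j * (of 0 ^ (sj - si))⁻¹
          = (of 0 ^ si)⁻¹ * θ' (of i * of j) * ((of 0 ^ si)⁻¹)⁻¹ := by
        rw [θ'.map_mul, hti, htj, ← hsi, ← hsj]
        group
      have hbound : cycNorm (of i * of 0 ^ (sj - si) * of j * (of 0 ^ (sj - si))⁻¹) ≤ 2 := by
        rw [e1, cycNorm_conj, cycNorm_eq_of_isConj (h2' i j hij)]
        refine (cycNorm_le_norm _).trans ?_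
        refine (FreeGroup.norm_mul_le _ _).trans ?_
        simp [FreeGroup.norm_of]
      obtain ⟨s, t, hst⟩ := lemA i j (of 0 ^ (sj - si)) hbound
      have hc0 : sj - si = 0 := exp_zero_of_eq hi hj hst
      omega
    have hfin : ∃ s : ℤ, ∀ i, θ' (of i) = of 0 ^ s * of i * of 0 ^ (-s) := by
      cases m with
      | zero =>
        refine ⟨0, fun i => ?_⟩
        have : i = 0 := Fin.ext (by have := i.isLt; omega)
        simp [this, hθ'0]
      | succ k =>
        have h10 : (1 : Fin (k + 2)) ≠ 0 := by
          simp [Fin.ext_iff]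
        refine ⟨S 1 h10, fun i => ?_⟩
        by_cases hi : i = 0
        · simp [hi, hθ'0]
          group
        · by_cases hi1 : i = 1
          · subst hi1; exact hS 1 h10
          · rw [hS i hi, pair i 1 hi h10 hi1]
    obtain ⟨s, hs⟩ := hfin
    refine ⟨c⁻¹ * of 0 ^ s, ?_⟩
    have : θ' = MulAut.conj (of 0 ^ s) := by
      apply mulAut_ext
      intro i
      rw [hs i, MulAut.conj_apply]
      group
    have hθeq : θ = (MulAut.conj c)⁻¹ * θ' := by rw [hθ']; group
    rw [hθeq, this, _root_.map_mul MulAut.conj c⁻¹ (of 0 ^ s),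
      _root_.map_inv MulAut.conj c]

end CycAux

namespace CycAux

open FreeGroup

theorem finite_ball (n B : ℕ) : Finite {x : FreeGroup (Fin n) // x.norm ≤ B} := by
  have hfin : Finite {l : List (Fin n × Bool) // l.length ≤ B} :=
    (List.finite_length_le (α := Fin n × Bool) (n := B)).to_subtype
  refine Finite.of_injective (fun x : {x : FreeGroup (Fin n) // x.norm ≤ B} =>
    (⟨x.1.toWord, x.2⟩ : {l : List (Fin n × Bool) // l.length ≤ B})) ?_
  intro x y hxy
  exact Subtype.ext (FreeGroup.toWord_injective (congrArg Subtype.val hxy))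

theorem exists_period {n : ℕ} (φ : MulAut (FreeGroup (Fin n))) (g : FreeGroup (Fin n))
    (H : ∃ B : ℕ, ∀ k : ℕ, 1 ≤ k → cycNorm ((φ ^ k) g) ≤ B) :
    ∃ d : ℕ, 1 ≤ d ∧ IsConj ((φ ^ d) g) g := by
  obtain ⟨B, hB⟩ := H
  have hmem : ∀ k : ℕ, ∃ z, (z * ((φ ^ (k + 1)) g) * z⁻¹).norm ≤ B := by
    intro k
    obtain ⟨z, hz⟩ := cycNorm_exists ((φ ^ (k + 1)) g)
    exact ⟨z, hz ▸ hB (k + 1) (Nat.le_add_left 1 k)⟩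
  choose z hz using hmem
  have : Finite {x : FreeGroup (Fin n) // x.norm ≤ B} := finite_ball n B
  obtain ⟨k, l, hkl, hfe⟩ := Finite.exists_ne_map_eq_of_infinite
    (fun k : ℕ => (⟨z k * ((φ ^ (k + 1)) g) * (z k)⁻¹, hz k⟩ :
      {x : FreeGroup (Fin n) // x.norm ≤ B}))
  have main : ∀ k l : ℕ, k < l →
      z k * ((φ ^ (k + 1)) g) * (z k)⁻¹ = z l * ((φ ^ (l + 1)) g) * (z l)⁻¹ →
      ∃ d : ℕ, 1 ≤ d ∧ IsConj ((φ ^ d) g) g := by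
    intro k l hlt heq
    have hconj : IsConj ((φ ^ (k + 1)) g) ((φ ^ (l + 1)) g) := by
      refine isConj_iff.2 ⟨(z l)⁻¹ * z k, ?_⟩
      have : (z l)⁻¹ * z k * ((φ ^ (k + 1)) g) * ((z l)⁻¹ * z k)⁻¹
          = (z l)⁻¹ * (z k * ((φ ^ (k + 1)) g) * (z k)⁻¹) * z l := by group
      rw [this, heq]
      group
    set d := l - k with hd
    have hd1 : 1 ≤ d := by omega
    have hsplit : (φ ^ (l + 1)) g = (φ ^ (k + 1)) ((φ ^ d) g) := by
      have : φ ^ (l + 1) = φ ^ (k + 1) * φ ^ d := by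
        rw [← pow_add]
        congr 1
        omega
      rw [this]
      rfl
    rw [hsplit] at hconj
    have := ((φ ^ (k + 1)).symm.toMonoidHom).map_isConj hconj
    simp only [MulEquiv.coe_toMonoidHom, MulEquiv.symm_apply_apply] at this
    exact ⟨d, hd1, this.symm⟩
  rcases lt_or_gt_of_ne hkl with h | h
  · exact main k l h (congrArg Subtype.val hfe)
  · exact main l k h (congrArg Subtype.val hfe).symm

theorem period_mul {n : ℕ} (φ : MulAut (FreeGroup (Fin n))) (g : FreeGroup (Fin n)) {d : ℕ}
    (hd : IsConj ((φ ^ d) g) g) (m : ℕ) : IsConj ((φ ^ (d * m)) g) g := by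
  induction m with
  | zero => simpa using IsConj.refl g
  | succ m ih =>
    have hsplit : φ ^ (d * (m + 1)) = φ ^ (d * m) * φ ^ d := by
      rw [← pow_add, Nat.mul_succ]
    rw [hsplit]
    have : (φ ^ (d * m) * φ ^ d) g = (φ ^ (d * m)) ((φ ^ d) g) := rfl
    rw [this]
    exact ((((φ ^ (d * m)) : MulAut (FreeGroup (Fin n))).toMonoidHom).map_isConj hd).trans ih

theorem forward {n : ℕ} (φ : MulAut (FreeGroup (Fin n)))
    (H : ∀ g : FreeGroup (Fin n), ∃ B : ℕ, ∀ k : ℕ, 1 ≤ k → cycNorm ((φ ^ k) g) ≤ B) :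
    ∃ k : ℕ, 1 ≤ k ∧ ∃ a : FreeGroup (Fin n), φ ^ k = MulAut.conj a := by
  have key : ∀ g, ∃ d : ℕ, 1 ≤ d ∧ IsConj ((φ ^ d) g) g := fun g =>
    exists_period φ g (H g)
  choose D hD1 hD2 using key
  set P := (∏ i : Fin n, D (of i)) * ∏ p : Fin n × Fin n, D (of p.1 * of p.2) with hP
  have hP1 : 1 ≤ P := by
    refine Nat.one_le_iff_ne_zero.2 ?_
    have h1 : 0 < ∏ i : Fin n, D (of i) := Finset.prod_pos fun i _ => hD1 _
    have h2 : 0 < ∏ p : Fin n × Fin n, D (of p.1 * of p.2) := Finset.prod_pos fun p _ => hD1 _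
    positivity
  refine ⟨P, hP1, ?_⟩
  refine rigid (φ ^ P) ?_ ?_
  · intro i
    have hdvd : D (of i) ∣ P :=
      Dvd.dvd.mul_right (Finset.dvd_prod_of_mem _ (Finset.mem_univ i)) _
    obtain ⟨m, hm⟩ := hdvd
    rw [hm]
    exact period_mul φ _ (hD2 (of i)) m
  · intro i j _
    have hdvd : D (of i * of j) ∣ P :=
      Dvd.dvd.mul_left (Finset.dvd_prod_of_mem
        (fun p : Fin n × Fin n => D (of p.1 * of p.2)) (Finset.mem_univ (i, j))) _
    obtain ⟨m, hm⟩ := hdvd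
    rw [hm]
    exact period_mul φ _ (hD2 (of i * of j)) m

theorem backward {n : ℕ} (φ : MulAut (FreeGroup (Fin n))) (k : ℕ) (hk : 1 ≤ k)
    (a : FreeGroup (Fin n)) (hik : φ ^ k = MulAut.conj a) (g : FreeGroup (Fin n)) :
    ∃ B : ℕ, ∀ m : ℕ, 1 ≤ m → cycNorm ((φ ^ m) g) ≤ B := by
  refine ⟨(Finset.range k).sup (fun r => cycNorm ((φ ^ r) g)), ?_⟩
  intro m _
  have hsplit : φ ^ m = MulAut.conj (a ^ (m / k)) * φ ^ (m % k) := by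
    conv_lhs => rw [← Nat.div_add_mod m k]
    rw [pow_add, pow_mul, hik, ← _root_.map_pow MulAut.conj a (m / k)]
  have happ : (φ ^ m) g = a ^ (m / k) * ((φ ^ (m % k)) g) * (a ^ (m / k))⁻¹ := by
    rw [hsplit]
    rfl
  rw [happ, cycNorm_conj]
  exact Finset.le_sup (f := fun r => cycNorm ((φ ^ r) g)) (Finset.mem_range.2 (Nat.mod_lt m hk))

end CycAux


end Aux

/-- Lemma: `φ` has polynomial growth of degree 0 (bounded growth of every conjugacy
class) iff `φ` has finite order in `Out(F_n)`, i.e. some positive power of `φ` is inner. -/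
theorem degZero_iff_finiteOrder_out (n : ℕ) (φ : MulAut (FreeGroup (Fin n))) :
    (∀ g : FreeGroup (Fin n), ∃ B : ℕ, ∀ k : ℕ, 1 ≤ k → cycNorm ((φ ^ k) g) ≤ B) ↔
      (∃ k : ℕ, 1 ≤ k ∧ ∃ a : FreeGroup (Fin n), φ ^ k = MulAut.conj a) := by
  constructor
  · exact CycAux.forward φ
  · rintro ⟨k, hk, a, ha⟩ g
    exact CycAux.backward φ k hk a ha g
end

section
/- Let N = F_n be a finitely generated free group and let P ≤ N be a finitely generated subgroup. Then P, regarded as a subset of N, is quasi-algebraic in N. -/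
set_option maxHeartbeats 1000000
noncomputable section
open scoped Pointwise
open scoped Classical

abbrev Gam := (Matrix (Fin 2) (Fin 2) ℚ)ˣ

abbrev MyVec := {v : Fin 2 → ℚ // v ≠ 0}

namespace PP

lemma core1 (x y : ℚ) (hne : ¬(x = 0 ∧ y = 0)) (h : ¬(|y| < |x| ∧ x * y < 0)) :
    |y| < |x + 3 * y| ∧ 0 ≤ (x + 3 * y) * y := by
  rcases lt_trichotomy y 0 with hy | hy | hy
  · have hxb : x + 3 * y < y := by
      rcases le_or_gt |x| |y| with hc | hc
      · have h2 := (abs_le.mp hc).2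
        rw [abs_of_neg hy] at h2
        linarith
      · have hxy : 0 ≤ x * y := by
          by_contra hn
          exact h ⟨hc, lt_of_not_ge hn⟩
        have hx0 : x ≤ 0 := by nlinarith
        linarith
    constructor
    · rw [abs_of_neg hy, abs_of_neg (by linarith : x + 3 * y < 0)]; linarith
    · nlinarith
  · subst hy
    have hx : x ≠ 0 := fun h0 => hne ⟨h0, rfl⟩
    constructor
    · simpa using abs_pos.mpr hx
    · simp
  · have hxb : y < x + 3 * y := by
      rcases le_or_gt |x| |y| with hc | hc
      · have h2 := (abs_le.mp hc).1
        rw [abs_of_pos hy] at h2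
        linarith
      · have hxy : 0 ≤ x * y := by
          by_contra hn
          exact h ⟨hc, lt_of_not_ge hn⟩
        have hx0 : 0 ≤ x := by nlinarith
        linarith
    constructor
    · rw [abs_of_pos hy, abs_of_pos (by linarith : 0 < x + 3 * y)]; linarith
    · nlinarith

lemma core2 (x y : ℚ) (hne : ¬(x = 0 ∧ y = 0)) (h : ¬(|y| < |x| ∧ 0 ≤ x * y)) :
    |y| < |x - 3 * y| ∧ (x - 3 * y) * y < 0 := by
  rcases lt_trichotomy y 0 with hy | hy | hy
  · have hxb : -y < x - 3 * y := by
      rcases le_or_gt |x| |y| with hc | hc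
      · have h2 := (abs_le.mp hc).1
        rw [abs_of_neg hy] at h2
        linarith
      · have hxy : x * y < 0 := by
          by_contra hn
          exact h ⟨hc, le_of_not_gt (by simpa using hn)⟩
        have hx0 : 0 < x := by nlinarith
        linarith
    constructor
    · rw [abs_of_neg hy, abs_of_pos (by linarith : 0 < x - 3 * y)]; linarith
    · nlinarith
  · subst hy
    exfalso
    apply h
    refine ⟨?_, by simp⟩
    simpa using abs_pos.mpr (fun h0 => hne ⟨h0, rfl⟩)
  · have hxb : x - 3 * y < -y := by
      rcases le_or_gt |x| |y| with hc | hc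
      · have h2 := (abs_le.mp hc).2
        rw [abs_of_pos hy] at h2
        linarith
      · have hxy : x * y < 0 := by
          by_contra hn
          exact h ⟨hc, le_of_not_gt (by simpa using hn)⟩
        have hx0 : x ≤ 0 := by nlinarith
        linarith
    constructor
    · rw [abs_of_pos hy, abs_of_neg (by linarith : x - 3 * y < 0)]; linarith
    · nlinarith

lemma mulVec_ne_zero (g : Gam) {v : Fin 2 → ℚ} (hv : v ≠ 0) : g.val.mulVec v ≠ 0 := by
  intro h
  apply hv
  have : (g⁻¹).val.mulVec (g.val.mulVec v) = 0 := by rw [h, Matrix.mulVec_zero]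
  rwa [Matrix.mulVec_mulVec, Units.inv_mul, Matrix.one_mulVec] at this

instance : MulAction Gam MyVec where
  smul g v := ⟨g.val.mulVec v.1, mulVec_ne_zero g v.2⟩
  one_smul v := by
    apply Subtype.ext
    show (1 : Gam).val.mulVec _ = _
    simp
  mul_smul g h v := by
    apply Subtype.ext
    show (g * h).val.mulVec _ = g.val.mulVec (h.val.mulVec _)
    rw [Matrix.mulVec_mulVec, Units.val_mul]

lemma smul_coords (g : Gam) (v : MyVec) : ((g • v : MyVec) : Fin 2 → ℚ) = g.val.mulVec v.1 := rfl

def A : Gam :=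
  ⟨!![1,3;0,1], !![1,-3;0,1],
   by ext i j; fin_cases i <;> fin_cases j <;> norm_num [Matrix.mul_apply, Fin.sum_univ_two],
   by ext i j; fin_cases i <;> fin_cases j <;> norm_num [Matrix.mul_apply, Fin.sum_univ_two]⟩

def T (c : ℚ) : Gam :=
  ⟨!![1,0;c,1], !![1,0;-c,1],
   by ext i j; fin_cases i <;> fin_cases j <;> norm_num [Matrix.mul_apply, Fin.sum_univ_two],
   by ext i j; fin_cases i <;> fin_cases j <;> norm_num [Matrix.mul_apply, Fin.sum_univ_two]⟩

lemma A_smul_0 (v : MyVec) : ((A • v : MyVec) : Fin 2 → ℚ) 0 = v.1 0 + 3 * v.1 1 := by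
  rw [smul_coords]; simp [A, Matrix.mulVec, dotProduct, Fin.sum_univ_two]

lemma A_smul_1 (v : MyVec) : ((A • v : MyVec) : Fin 2 → ℚ) 1 = v.1 1 := by
  rw [smul_coords]; simp [A, Matrix.mulVec, dotProduct, Fin.sum_univ_two]

lemma Ainv_smul_0 (v : MyVec) : ((A⁻¹ • v : MyVec) : Fin 2 → ℚ) 0 = v.1 0 - 3 * v.1 1 := by
  rw [smul_coords]
  have : (A⁻¹).val = !![1,-3;0,1] := rfl
  simp [this, Matrix.mulVec, dotProduct, Fin.sum_univ_two]; ring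

lemma Ainv_smul_1 (v : MyVec) : ((A⁻¹ • v : MyVec) : Fin 2 → ℚ) 1 = v.1 1 := by
  rw [smul_coords]
  have : (A⁻¹).val = !![1,-3;0,1] := rfl
  simp [this, Matrix.mulVec, dotProduct, Fin.sum_univ_two]

lemma T_smul_0 (c : ℚ) (v : MyVec) : ((T c • v : MyVec) : Fin 2 → ℚ) 0 = v.1 0 := by
  rw [smul_coords]; simp [T, Matrix.mulVec, dotProduct, Fin.sum_univ_two]

lemma T_smul_1 (c : ℚ) (v : MyVec) : ((T c • v : MyVec) : Fin 2 → ℚ) 1 = c * v.1 0 + v.1 1 := by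
  rw [smul_coords]; simp [T, Matrix.mulVec, dotProduct, Fin.sum_univ_two]

def XA : Set MyVec := {v | |v.1 1| < |v.1 0| ∧ 0 ≤ v.1 0 * v.1 1}
def YA : Set MyVec := {v | |v.1 1| < |v.1 0| ∧ v.1 0 * v.1 1 < 0}

lemma vec_nonzero (v : MyVec) : ¬(v.1 0 = 0 ∧ v.1 1 = 0) := by
  rintro ⟨h0, h1⟩
  exact v.2 (funext fun i => by fin_cases i <;> simpa [h0, h1])

lemma hXA : ∀ v : MyVec, v ∉ YA → (A • v) ∈ XA := by
  intro v hv
  have key := core1 (v.1 0) (v.1 1) (vec_nonzero v) (fun hc => hv hc)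
  constructor
  · show |((A • v : MyVec) : Fin 2 → ℚ) 1| < |((A • v : MyVec) : Fin 2 → ℚ) 0|
    rw [A_smul_0, A_smul_1]
    exact key.1
  · show 0 ≤ ((A • v : MyVec) : Fin 2 → ℚ) 0 * ((A • v : MyVec) : Fin 2 → ℚ) 1
    rw [A_smul_0, A_smul_1]
    exact key.2

lemma hYA : ∀ v : MyVec, v ∉ XA → (A⁻¹ • v) ∈ YA := by
  intro v hv
  have key := core2 (v.1 0) (v.1 1) (vec_nonzero v) (fun hc => hv hc)
  constructor
  · show |((A⁻¹ • v : MyVec) : Fin 2 → ℚ) 1| < |((A⁻¹ • v : MyVec) : Fin 2 → ℚ) 0|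
    rw [Ainv_smul_0, Ainv_smul_1]
    exact key.1
  · show ((A⁻¹ • v : MyVec) : Fin 2 → ℚ) 0 * ((A⁻¹ • v : MyVec) : Fin 2 → ℚ) 1 < 0
    rw [Ainv_smul_0, Ainv_smul_1]
    exact key.2

/-- cone of halfwidth 1 around slope c -/
def Cone (c : ℚ) : Set MyVec := {v | |v.1 1 - c * v.1 0| < |v.1 0|}

lemma T_XA_cone (c : ℚ) : ∀ v : MyVec, v ∈ XA ∪ YA → (T c • v) ∈ Cone c := by
  rintro v (hv | hv) <;>
  · show |((T c • v : MyVec) : Fin 2 → ℚ) 1 - c * ((T c • v : MyVec) : Fin 2 → ℚ) 0| <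
      |((T c • v : MyVec) : Fin 2 → ℚ) 0|
    rw [T_smul_0, T_smul_1]
    simpa using hv.1

lemma cone_disj {c c' : ℚ} (h : 2 ≤ |c - c'|) : Disjoint (Cone c) (Cone c') := by
  rw [Set.disjoint_left]
  rintro v hv hv'
  have h1 : |(c' - c) * v.1 0| ≤ |v.1 1 - c * v.1 0| + |v.1 1 - c' * v.1 0| := by
    have : (c' - c) * v.1 0 = (v.1 1 - c * v.1 0) - (v.1 1 - c' * v.1 0) := by ring
    rw [this]
    exact abs_sub _ _
  rw [abs_mul] at h1
  have h2 : |c' - c| = |c - c'| := abs_sub_comm _ _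
  have hva : |v.1 1 - c * v.1 0| < |v.1 0| := hv
  have hvb : |v.1 1 - c' * v.1 0| < |v.1 0| := hv'
  have hx : 0 < |v.1 0| := lt_of_le_of_lt (abs_nonneg _) hva
  have h3 : 2 * |v.1 0| ≤ |c' - c| * |v.1 0| := by rw [h2]; nlinarith
  linarith

end PP

namespace PP

/-- the free generators -/
def M (k : ℕ) (i : Fin k) : Gam := T (2 * i.val) * A * (T (2 * i.val))⁻¹

def Xs (k : ℕ) (i : Fin k) : Set MyVec := T (2 * i.val) • XA
def Ys (k : ℕ) (i : Fin k) : Set MyVec := T (2 * i.val) • YA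

lemma fin_cast_abs {k : ℕ} {i j : Fin k} (hij : i ≠ j) :
    2 ≤ |(2 * i.val : ℚ) - (2 * j.val : ℚ)| := by
  have h : i.val ≠ j.val := fun h => hij (Fin.ext h)
  rcases Nat.lt_or_ge i.val j.val with hc | hc
  · have : (i.val : ℚ) + 1 ≤ (j.val : ℚ) := by exact_mod_cast hc
    rw [abs_of_neg (by linarith)]
    linarith
  · have hc' : j.val < i.val := lt_of_le_of_ne hc (Ne.symm h)
    have : (j.val : ℚ) + 1 ≤ (i.val : ℚ) := by exact_mod_cast hc'
    rw [abs_of_pos (by linarith)]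
    linarith

lemma Xs_cone (k : ℕ) (i : Fin k) : Xs k i ⊆ Cone (2 * i.val) := by
  rintro w ⟨v, hv, rfl⟩
  exact T_XA_cone _ v (Or.inl hv)

lemma Ys_cone (k : ℕ) (i : Fin k) : Ys k i ⊆ Cone (2 * i.val) := by
  rintro w ⟨v, hv, rfl⟩
  exact T_XA_cone _ v (Or.inr hv)

lemma XA_YA_disj : Disjoint XA YA := by
  rw [Set.disjoint_left]
  rintro v ⟨_, h1⟩ ⟨_, h2⟩
  exact absurd h2 (not_lt.mpr h1)

theorem sanov (k : ℕ) [Nontrivial (Fin k)] :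
    Function.Injective (FreeGroup.lift (M k) : FreeGroup (Fin k) →* Gam) := by
  apply FreeGroup.injective_lift_of_ping_pong (M k) (Xs k) (Ys k)
  · intro i
    have hv : (![1, (0:ℚ)]) ≠ 0 := by
      intro h
      have := congrFun h 0
      norm_num at this
    have hmem : (⟨![1, 0], hv⟩ : MyVec) ∈ XA := by constructor <;> norm_num
    exact ⟨T (2 * i.val) • ⟨![1, 0], hv⟩, Set.smul_mem_smul_set hmem⟩
  · intro i j hij
    exact Set.disjoint_of_subset (Xs_cone k i) (Xs_cone k j) (cone_disj (fin_cast_abs hij))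
  · intro i j hij
    exact Set.disjoint_of_subset (Ys_cone k i) (Ys_cone k j) (cone_disj (fin_cast_abs hij))
  · intro i j
    rcases eq_or_ne i j with rfl | hij
    · show Disjoint (T (2 * i.val) • XA) (T (2 * i.val) • YA)
      rw [Set.disjoint_left]
      rintro v ⟨w, hw, rfl⟩ ⟨w', hw', heq⟩
      rw [MulAction.injective (T (2 * i.val)) heq] at hw'
      exact Set.disjoint_left.mp XA_YA_disj hw hw'
    · exact Set.disjoint_of_subset (Xs_cone k i) (Ys_cone k j) (cone_disj (fin_cast_abs hij))
  · intro i
    show M k i • (T (2 * i.val) • YA)ᶜ ⊆ Xs k i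
    rw [← Set.smul_set_compl]
    have : M k i • T (2 * i.val) • YAᶜ = T (2 * i.val) • (A • YAᶜ) := by
      rw [smul_smul, smul_smul, M]
      congr 1
      group
    rw [this]
    apply Set.smul_set_mono
    rintro w ⟨v, hv, rfl⟩
    exact hXA v hv
  · intro i
    show (M k i)⁻¹ • (T (2 * i.val) • XA)ᶜ ⊆ Ys k i
    rw [← Set.smul_set_compl]
    have : (M k i)⁻¹ • T (2 * i.val) • XAᶜ = T (2 * i.val) • (A⁻¹ • XAᶜ) := by
      rw [smul_smul, smul_smul, M]
      congr 1
      group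
    rw [this]
    apply Set.smul_set_mono
    rintro w ⟨v, hv, rfl⟩
    exact hYA v hv

instance freegroup_fin0_subsingleton : Subsingleton (FreeGroup (Fin 0)) := by
  constructor
  intro x y
  have key : ∀ z : FreeGroup (Fin 0), z = 1 := by
    intro z
    have hz : z.toWord = [] := by
      cases h : z.toWord with
      | nil => rfl
      | cons a l => exact a.1.elim0
    rw [← FreeGroup.mk_toWord (x := z), hz, ← FreeGroup.one_eq_mk]
  rw [key x, key y]

/-- An injective homomorphism from any f.g. free group into GL₂(ℚ). -/
theorem exists_embedding (n : ℕ) :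
    ∃ φ : FreeGroup (Fin n) →* Gam, Function.Injective φ := by
  cases n with
  | zero => exact ⟨1, fun a b _ => Subsingleton.elim a b⟩
  | succ m =>
    have : Nontrivial (Fin (m + 3)) := Fin.nontrivial_iff_two_le.2 (by omega)
    set j : Fin (m + 1) → Fin (m + 3) := fun i => ⟨i.val, by omega⟩ with hj
    have hmapinj : Function.Injective (FreeGroup.map j : FreeGroup (Fin (m+1)) → FreeGroup (Fin (m+3))) := by
      set r : Fin (m + 3) → Fin (m + 1) := fun i => if h : i.val < m + 1 then ⟨i.val, h⟩ else ⟨0, Nat.succ_pos m⟩ with hr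
      have hleft : Function.LeftInverse (FreeGroup.map r) (FreeGroup.map j) := by
        intro x
        rw [FreeGroup.map.comp]
        have : r ∘ j = id := by
          funext i
          simp only [hr, hj, Function.comp_apply]
          rw [dif_pos i.isLt]
          rfl
        rw [this, FreeGroup.map.id]
      exact hleft.injective
    refine ⟨(FreeGroup.lift (M (m+3))).comp (FreeGroup.map j), ?_⟩
    rw [MonoidHom.coe_comp]
    exact Function.Injective.comp (sanov (m+3)) hmapinj

end PP




namespace ENG

open Classical

variable (ι : Type) [Fintype ι] [DecidableEq ι]

abbrev R (ι : Type) := MvPolynomial (ι × Bool × Fin 2 × Fin 2) ℚ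

def gen (i : ι) (b : Bool) : Matrix (Fin 2) (Fin 2) (R ι) :=
  Matrix.of fun k l => MvPolynomial.X (i, b, k, l)

def wm (s : FreeGroup ι) : Matrix (Fin 2) (Fin 2) (R ι) :=
  ((s.toWord).map fun p => gen ι p.1 p.2).prod

def ev (g : ι → Gam) : R ι →+* ℚ :=
  (MvPolynomial.eval fun q : ι × Bool × Fin 2 × Fin 2 =>
    (if q.2.1 then (g q.1).val else ((g q.1)⁻¹).val) q.2.2.1 q.2.2.2)

lemma eval_wm (g : ι → Gam) (s : FreeGroup ι) :
    (ev ι g).mapMatrix (wm ι s) = ((FreeGroup.lift g s : Gam) : Matrix (Fin 2) (Fin 2) ℚ) := by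
  conv_rhs => rw [← FreeGroup.mk_toWord (x := s)]
  rw [FreeGroup.lift_mk]
  have h1 : (((List.map (fun x => bif x.2 then g x.1 else (g x.1)⁻¹) s.toWord).prod : Gam) :
      Matrix (Fin 2) (Fin 2) ℚ) =
      ((List.map (fun x => bif x.2 then g x.1 else (g x.1)⁻¹) s.toWord).map
        (fun u : Gam => (u : Matrix (Fin 2) (Fin 2) ℚ))).prod := by
    generalize (List.map (fun x => bif x.2 then g x.1 else (g x.1)⁻¹) s.toWord) = l
    induction l with
    | nil => simp
    | cons a l ih => simp [ih]
  rw [h1]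
  have h2 : (ev ι g).mapMatrix (wm ι s) =
      ((s.toWord.map fun p => gen ι p.1 p.2).map ((ev ι g).mapMatrix :
        Matrix (Fin 2) (Fin 2) (R ι) → Matrix (Fin 2) (Fin 2) ℚ)).prod := by
    rw [wm]
    generalize (List.map (fun p => gen ι p.1 p.2) s.toWord) = l
    induction l with
    | nil => simp
    | cons a l ih =>
      simp only [List.prod_cons, List.map_cons, map_mul]
      rw [ih]
  rw [h2]
  rw [List.map_map, List.map_map]
  congr 1
  apply List.map_congr_left
  intro p _
  cases hb : p.2 with
  | true =>
    ext k l
    simp [gen, ev, RingHom.mapMatrix_apply, Matrix.map_apply, hb]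
  | false =>
    ext k l
    simp [gen, ev, RingHom.mapMatrix_apply, Matrix.map_apply, hb]

/-- Equational noetherianity of GL₂(ℚ), for systems over an arbitrary finite index type. -/
theorem EN_Gam (S : Set (FreeGroup ι)) :
    ∃ T : Finset (FreeGroup ι), ↑T ⊆ S ∧
      ∀ g : ι → Gam, (∀ t ∈ T, FreeGroup.lift g t = 1) → ∀ s ∈ S, FreeGroup.lift g s = 1 := by
  -- the set of defining polynomials
  set TS : Set (R ι) := ⋃ s ∈ S, {p | ∃ k l : Fin 2, p = wm ι s k l - (1 : Matrix (Fin 2) (Fin 2) (R ι)) k l}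
    with hTS
  have hNoeth : IsNoetherianRing (R ι) := inferInstance
  have hfg : (Ideal.span TS).FG := IsNoetherian.noetherian _
  obtain ⟨G, hG⟩ := hfg
  -- each generator lies in the span of a finite subset of TS
  have hx : ∀ x ∈ (G : Set (R ι)), ∃ T' : Finset (R ι), ↑T' ⊆ TS ∧ x ∈ Ideal.span (T' : Set (R ι)) := by
    intro x hxG
    have : x ∈ Ideal.span TS := by rw [← hG]; exact Ideal.subset_span hxG
    obtain ⟨T', h1, h2⟩ := Submodule.mem_span_finite_of_mem_span this
    exact ⟨T', h1, h2⟩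
  choose Tof hTof1 hTof2 using hx
  set Tfin : Finset (R ι) := G.attach.biUnion (fun x => Tof x.1 x.2) with hTfin
  have hTfinTS : (Tfin : Set (R ι)) ⊆ TS := by
    intro p hp
    simp only [hTfin, Finset.coe_biUnion, Set.mem_iUnion, Finset.mem_coe, Finset.mem_attach,
      Set.iUnion_true] at hp
    obtain ⟨x, hx⟩ := hp
    exact hTof1 x.1 x.2 hx
  have hspan : Ideal.span TS ≤ Ideal.span (Tfin : Set (R ι)) := by
    rw [← hG]
    rw [Ideal.span_le]
    intro x hxG
    have := hTof2 x hxG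
    refine Ideal.span_mono ?_ this
    intro p hp
    simp only [hTfin, Finset.coe_biUnion, Set.mem_iUnion, Finset.mem_coe, Finset.mem_attach,
      Set.iUnion_true]
    exact ⟨⟨x, hxG⟩, hp⟩
  -- choose a word of S for each polynomial in Tfin
  have hsel : ∀ p ∈ (Tfin : Set (R ι)), ∃ s ∈ S, ∃ k l : Fin 2,
      p = wm ι s k l - (1 : Matrix (Fin 2) (Fin 2) (R ι)) k l := by
    intro p hp
    have := hTfinTS hp
    simp only [hTS, Set.mem_iUnion, Set.mem_setOf_eq] at this
    obtain ⟨s, hs, k, l, he⟩ := this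
    exact ⟨s, hs, k, l, he⟩
  choose sel hsel1 hsel2 using hsel
  refine ⟨Tfin.attach.image (fun p => sel p.1 (Finset.mem_coe.mpr p.2)), ?_, ?_⟩
  · intro t ht
    obtain ⟨p, hmem, rfl⟩ := Finset.mem_image.mp ht
    exact hsel1 _ _
  · intro g hg s hs
    -- the kernel of evaluation
    have hker : ∀ p ∈ (Tfin : Set (R ι)), (ev ι g) p = 0 := by
      intro p hp
      obtain ⟨k, l, he⟩ := hsel2 p (Finset.mem_coe.mpr hp)
      have ht : FreeGroup.lift g (sel p hp) = 1 := by
        apply hg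
        refine Finset.mem_image.mpr ⟨⟨p, hp⟩, Finset.mem_attach _ _, rfl⟩
      have hmat : (ev ι g).mapMatrix (wm ι (sel p hp)) = 1 := by
        rw [eval_wm, ht]; rfl
      have : (ev ι g) (wm ι (sel p hp) k l) = (1 : Matrix (Fin 2) (Fin 2) ℚ) k l := by
        have := congrFun (congrFun (congrArg (fun M => (M : Matrix (Fin 2) (Fin 2) ℚ)) hmat) k) l
        simpa [RingHom.mapMatrix_apply, Matrix.map_apply] using this
      rw [he]
      rw [map_sub, this]
      rcases eq_or_ne k l with rfl | hkl
      · simp [Matrix.one_apply]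
      · simp [Matrix.one_apply, hkl]
    have hkerspan : Ideal.span (Tfin : Set (R ι)) ≤ RingHom.ker (ev ι g) := by
      rw [Ideal.span_le]
      intro p hp
      exact hker p hp
    have hSker : ∀ k l : Fin 2,
        (ev ι g) (wm ι s k l - (1 : Matrix (Fin 2) (Fin 2) (R ι)) k l) = 0 := by
      intro k l
      have hmem : (wm ι s k l - (1 : Matrix (Fin 2) (Fin 2) (R ι)) k l) ∈ Ideal.span TS := by
        apply Ideal.subset_span
        simp only [hTS, Set.mem_iUnion, Set.mem_setOf_eq]
        exact ⟨s, hs, k, l, rfl⟩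
      exact hkerspan (hspan hmem)
    apply Units.ext
    rw [← eval_wm]
    ext k l
    have := hSker k l
    rw [map_sub, sub_eq_zero] at this
    simp only [RingHom.mapMatrix_apply, Matrix.map_apply]
    rw [this]
    show (ev ι g) ((1 : Matrix (Fin 2) (Fin 2) (R ι)) k l) = (1 : Matrix (Fin 2) (Fin 2) ℚ) k l
    rcases eq_or_ne k l with rfl | hkl
    · simp [Matrix.one_apply]
    · simp [Matrix.one_apply, hkl]

end ENG



/-! ### Generic wreath-type semidirect product -/

namespace Wreath

variable (c : Type) (M : Type) [Group M]

/-- permutations act on functions by precomposition with the inverse -/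
def actP : Equiv.Perm c →* MulAut (c → M) where
  toFun σ :=
    { toFun := fun f => f ∘ ⇑σ.symm
      invFun := fun f => f ∘ ⇑σ
      left_inv := fun f => by funext x; simp
      right_inv := fun f => by funext x; simp
      map_mul' := fun f g => rfl }
  map_one' := by
    apply MulEquiv.toMonoidHom_injective
    ext f x
    simp; rfl
  map_mul' σ τ := by
    apply MulEquiv.toMonoidHom_injective
    ext f x
    simp [Equiv.Perm.mul_def]

@[simp] lemma actP_apply (σ : Equiv.Perm c) (f : c → M) (x : c) :
    (actP c M σ f) x = f (σ.symm x) := rfl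

/-- the wreath-type product -/
abbrev Wr := (c → M) ⋊[actP c M] Equiv.Perm c

variable {c M}
variable {N : Type} [Group N]

/-- base change along a group homomorphism -/
def wrMap (h : M →* N) : Wr c M →* Wr c N where
  toFun w := ⟨h ∘ w.left, w.right⟩
  map_one' := by
    ext <;> simp [SemidirectProduct.one_left, SemidirectProduct.one_right]
  map_mul' w w' := by
    apply SemidirectProduct.ext
    · funext x
      show h ((w * w').left x) = _
      rw [SemidirectProduct.mul_left]
      simp [SemidirectProduct.mul_left]
    · show (w * w').right = _
      simp [SemidirectProduct.mul_right]

@[simp] lemma wrMap_left (h : M →* N) (w : Wr c M) (x : c) :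
    ((wrMap h w).left : c → N) x = h (w.left x) := rfl

@[simp] lemma wrMap_right (h : M →* N) (w : Wr c M) :
    (wrMap h w).right = w.right := rfl

end Wreath

/-! ### The Stallings-type permutation data for a f.g. subgroup of a free group -/

namespace Hall

open Wreath FreeGroup

variable {n : ℕ} (P : Subgroup (FreeGroup (Fin n))) (gens : Finset (FreeGroup (Fin n)))
  (hgens : Subgroup.closure (gens : Set (FreeGroup (Fin n))) = P)

local notation "F" => FreeGroup (Fin n)
local notation "X" => FreeGroup (Fin n) ⧸ P

/-- base point -/
def x0 : FreeGroup (Fin n) ⧸ P := ((1 : F) : X)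

/-- coset representatives, normalized at the base point -/
def u (x : X) : F := if x = x0 P then 1 else Quotient.out x

lemma u_spec (x : X) : ((u P x : F) : X) = x := by
  rw [u]
  split_ifs with h
  · rw [h]; rfl
  · exact QuotientGroup.out_eq' x

lemma u_x0 : u P (x0 P) = 1 := by rw [u, if_pos rfl]

lemma mem_iff (g : F) : g ∈ P ↔ ((g : F) : X) = x0 P := by
  rw [x0, QuotientGroup.eq]
  simp

/-- the finite core: cosets of inverses of prefixes of the generators -/
def statesOf (w : F) : Finset X :=
  ((List.range (w.toWord.length + 1)).map
    (fun j => (((FreeGroup.mk (w.toWord.take j))⁻¹ : F) : X))).toFinset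

def C : Finset X := gens.biUnion (statesOf P) ∪ {x0 P}

lemma x0_mem_C : x0 P ∈ C P gens := Finset.mem_union_right _ (Finset.mem_singleton_self _)

lemma state_mem_C {w : F} (hw : w ∈ gens) {j : ℕ} (hj : j ≤ w.toWord.length) :
    (((FreeGroup.mk (w.toWord.take j))⁻¹ : F) : X) ∈ C P gens := by
  apply Finset.mem_union_left
  apply Finset.mem_biUnion.mpr
  refine ⟨w, hw, ?_⟩
  rw [statesOf, List.mem_toFinset]
  exact List.mem_map.mpr ⟨j, List.mem_range.mpr (Nat.lt_succ_of_le hj), rfl⟩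

/-- the carrier of the finite permutation data -/
abbrev CT := {x : FreeGroup (Fin n) ⧸ P // x ∈ C P gens}

def c0 : CT P gens := ⟨x0 P, x0_mem_C P gens⟩

/-- the partial coset translation, as an equivalence between subtypes -/
def eqv (a : Fin n) :
    {c : CT P gens // (FreeGroup.of a) • (c.1 : X) ∈ C P gens} ≃
    {c : CT P gens // (FreeGroup.of a)⁻¹ • (c.1 : X) ∈ C P gens} where
  toFun c := ⟨⟨(FreeGroup.of a) • (c.1 : X), c.2⟩, by simp⟩
  invFun c := ⟨⟨(FreeGroup.of a)⁻¹ • (c.1 : X), c.2⟩, by simp⟩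
  left_inv c := by
    apply Subtype.ext; apply Subtype.ext
    show (FreeGroup.of a)⁻¹ • ((FreeGroup.of a) • (c.1 : X)) = (c.1 : X)
    simp
  right_inv c := by
    apply Subtype.ext; apply Subtype.ext
    show (FreeGroup.of a) • ((FreeGroup.of a)⁻¹ • (c.1 : X)) = (c.1 : X)
    simp

/-- the chosen permutations -/
def piP (a : Fin n) : Equiv.Perm (CT P gens) := (eqv P gens a).extendSubtype

lemma piP_spec (a : Fin n) (c : CT P gens) (h : (FreeGroup.of a) • (c.1 : X) ∈ C P gens) :
    piP P gens a c = ⟨(FreeGroup.of a) • c.1, h⟩ := by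
  rw [piP, Equiv.extendSubtype_apply_of_mem (eqv P gens a) c h]
  rfl

lemma piP_inv_spec (a : Fin n) (c : CT P gens) (h : (FreeGroup.of a)⁻¹ • (c.1 : X) ∈ C P gens) :
    (piP P gens a)⁻¹ c = ⟨(FreeGroup.of a)⁻¹ • c.1, h⟩ := by
  rw [Equiv.Perm.inv_def, Equiv.symm_apply_eq]
  rw [piP_spec P gens a ⟨(FreeGroup.of a)⁻¹ • c.1, h⟩ (by simpa using c.2)]
  apply Subtype.ext
  show (c.1 : X) = (FreeGroup.of a) • ((FreeGroup.of a)⁻¹ • (c.1 : X))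
  exact (smul_inv_smul _ _).symm

/-- the cocycle values -/
def rho (a : Fin n) (c : CT P gens) : F :=
  if h : (FreeGroup.of a)⁻¹ • (c.1 : X) ∈ C P gens then
    (u P c.1)⁻¹ * FreeGroup.of a * u P ((FreeGroup.of a)⁻¹ • c.1)
  else 1

lemma rho_mem (a : Fin n) (c : CT P gens) : rho P gens a c ∈ P := by
  rw [rho]
  split_ifs with h
  · have h1 : ((u P ((FreeGroup.of a)⁻¹ • c.1) : F) : X) = (FreeGroup.of a)⁻¹ • c.1 := u_spec _ _
    have h2 : (((FreeGroup.of a)⁻¹ * u P c.1 : F) : X) = (FreeGroup.of a)⁻¹ • c.1 := by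
      conv_rhs => rw [← u_spec P c.1]
      rfl
    have h3 : (((FreeGroup.of a)⁻¹ * u P c.1)⁻¹ * u P ((FreeGroup.of a)⁻¹ • c.1)) ∈ P := by
      rw [← QuotientGroup.eq]
      rw [h2, h1]
    convert h3 using 1
    group
  · exact one_mem P

/-- the wreath cocycle homomorphism -/
def Phi : FreeGroup (Fin n) →* Wr (CT P gens) (FreeGroup (Fin n)) :=
  FreeGroup.lift (fun a => ⟨rho P gens a, piP P gens a⟩)

lemma Phi_left_mem (g : F) (c : CT P gens) : (Phi P gens g).left c ∈ P := by
  induction g using FreeGroup.induction_on generalizing c with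
  | C1 => rw [_root_.map_one, SemidirectProduct.one_left]; exact one_mem P
  | of x =>
    show (Phi P gens (FreeGroup.of x)).left c ∈ P
    rw [Phi, FreeGroup.lift_apply_of]
    exact rho_mem P gens x c
  | inv_of x hx =>
    show (Phi P gens (FreeGroup.of x)⁻¹).left c ∈ P
    rw [_root_.map_inv, SemidirectProduct.inv_left]
    apply inv_mem
    exact hx _
  | mul x y hx hy =>
    rw [_root_.map_mul, SemidirectProduct.mul_left]
    exact mul_mem (hx c) (hy _)

lemma Phi_of (x : Fin n) :
    Phi P gens (FreeGroup.of x) = ⟨rho P gens x, piP P gens x⟩ := FreeGroup.lift_apply_of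

lemma mk_single_true (x : Fin n) : FreeGroup.mk [(x, true)] = FreeGroup.of x := rfl

lemma mk_single_false (x : Fin n) : FreeGroup.mk [(x, false)] = (FreeGroup.of x)⁻¹ := by
  rw [← mk_single_true, FreeGroup.inv_mk]
  rfl

lemma smul_coset (g h : F) : g • ((h : F) : X) = ((g * h : F) : X) := rfl

lemma mk_left (f : CT P gens → F) (σ : Equiv.Perm (CT P gens)) :
    ((⟨f, σ⟩ : Wr (CT P gens) F)).left = f := rfl

lemma mk_right (f : CT P gens → F) (σ : Equiv.Perm (CT P gens)) :
    ((⟨f, σ⟩ : Wr (CT P gens) F)).right = σ := rfl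

lemma tele (w : F) (hw : w ∈ gens) :
    ∀ j, ∀ _ : j ≤ w.toWord.length,
      ((((Phi P gens (FreeGroup.mk (w.toWord.take j))).right)⁻¹ (c0 P gens)) : X) =
        (((FreeGroup.mk (w.toWord.take j))⁻¹ : F) : X) ∧
      (Phi P gens (FreeGroup.mk (w.toWord.take j))).left (c0 P gens) =
        FreeGroup.mk (w.toWord.take j) * u P (((FreeGroup.mk (w.toWord.take j))⁻¹ : F) : X) := by
  intro j
  induction j with
  | zero =>
    intro hj
    have h1 : FreeGroup.mk (w.toWord.take 0) = (1 : F) := by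
      rw [List.take_zero, ← FreeGroup.one_eq_mk]
    rw [h1, _root_.map_one]
    constructor
    · show (((1 : Equiv.Perm (CT P gens))⁻¹ (c0 P gens)) : X) = _
      simp [c0, x0]
    · rw [SemidirectProduct.one_left]
      show (1 : F) = 1 * u P (((1⁻¹ : F) : X))
      rw [inv_one, one_mul]
      have : (((1 : F) : X)) = x0 P := rfl
      rw [this, u_x0]
  | succ j ih =>
    intro hj
    have hj' : j ≤ w.toWord.length := Nat.le_of_succ_le hj
    have hlt : j < w.toWord.length := Nat.lt_of_succ_le hj
    obtain ⟨ih1, ih2⟩ := ih hj'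
    set v : F := FreeGroup.mk (w.toWord.take j) with hv
    set p : Fin n × Bool := w.toWord.get ⟨j, hlt⟩ with hp
    have hsplit : w.toWord.take (j+1) = w.toWord.take j ++ [p] := by
      rw [List.take_succ]
      congr
      rw [List.getElem?_eq_getElem hlt]
      rfl
    have hv' : FreeGroup.mk (w.toWord.take (j+1)) = v * FreeGroup.mk [p] := by
      rw [hsplit, ← FreeGroup.mul_mk]
    have hC1 : ((v⁻¹ : F) : X) ∈ C P gens := state_mem_C P gens hw hj'
    have hC2 : (((v * FreeGroup.mk [p])⁻¹ : F) : X) ∈ C P gens := by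
      rw [← hv']
      exact state_mem_C P gens hw hj
    have ihState : ((Phi P gens v).right)⁻¹ (c0 P gens) = ⟨((v⁻¹ : F) : X), hC1⟩ :=
      Subtype.ext ih1
    have ihSymm : ((Phi P gens v).right).symm (c0 P gens) = ⟨((v⁻¹ : F) : X), hC1⟩ := by
      rw [← Equiv.Perm.inv_def]
      exact ihState
    have hval : ((⟨((v⁻¹ : F) : X), hC1⟩ : CT P gens) : X) = ((v⁻¹ : F) : X) := rfl
    rw [hv']
    cases hb : p.2 with
    | false =>
      have hpp : FreeGroup.mk [p] = (FreeGroup.of p.1)⁻¹ := by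
        have hpe : p = (p.1, false) := Prod.ext rfl hb
        rw [hpe, mk_single_false]
      rw [hpp, _root_.map_mul, _root_.map_inv, Phi_of]
      have hsm : (FreeGroup.of p.1) • ((v⁻¹ : F) : X) = (((v * (FreeGroup.of p.1)⁻¹)⁻¹ : F) : X) := by
        rw [smul_coset, mul_inv_rev, inv_inv]
      have hmem2 : (FreeGroup.of p.1) • ((v⁻¹ : F) : X) ∈ C P gens := by
        rw [hsm]
        rwa [hpp] at hC2
      constructor
      · rw [SemidirectProduct.mul_right, SemidirectProduct.inv_right, mk_right]
        rw [mul_inv_rev, inv_inv, Equiv.Perm.mul_apply, ihState]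
        rw [piP_spec P gens p.1 ⟨((v⁻¹ : F) : X), hC1⟩ hmem2]
        show (FreeGroup.of p.1) • ((v⁻¹ : F) : X) = _
        rw [hsm]
      · rw [SemidirectProduct.mul_left, SemidirectProduct.inv_left]
        simp only [mk_left, mk_right]
        rw [Pi.mul_apply, ih2, actP_apply, ihSymm, actP_apply]
        rw [Pi.inv_apply]
        rw [show Equiv.symm ((piP P gens p.1)⁻¹) = piP P gens p.1 from by
          rw [Equiv.Perm.inv_def, Equiv.symm_symm]]
        rw [piP_spec P gens p.1 ⟨((v⁻¹ : F) : X), hC1⟩ hmem2]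
        simp only [rho]
        have hcond : (FreeGroup.of p.1)⁻¹ •
            ((⟨(FreeGroup.of p.1) • ((v⁻¹ : F) : X), hmem2⟩ : CT P gens) : X) ∈ C P gens := by
          show (FreeGroup.of p.1)⁻¹ • ((FreeGroup.of p.1) • ((v⁻¹ : F) : X)) ∈ C P gens
          rw [inv_smul_smul]
          exact hC1
        rw [dif_pos hcond]
        rw [show (FreeGroup.of p.1)⁻¹ • ((FreeGroup.of p.1) • ((v⁻¹ : F) : X)) = ((v⁻¹ : F) : X)
          from inv_smul_smul _ _]
        simp only [hsm]
        group
    | true =>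
      have hpp : FreeGroup.mk [p] = FreeGroup.of p.1 := by
        have hpe : p = (p.1, true) := Prod.ext rfl hb
        rw [hpe, mk_single_true]
      rw [hpp, _root_.map_mul, Phi_of]
      have hsm : (FreeGroup.of p.1)⁻¹ • ((v⁻¹ : F) : X) = (((v * FreeGroup.of p.1)⁻¹ : F) : X) := by
        rw [smul_coset, mul_inv_rev]
      have hmem2 : (FreeGroup.of p.1)⁻¹ • ((v⁻¹ : F) : X) ∈ C P gens := by
        rw [hsm]
        rwa [hpp] at hC2
      constructor
      · rw [SemidirectProduct.mul_right, mk_right]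
        rw [mul_inv_rev, Equiv.Perm.mul_apply, ihState]
        rw [piP_inv_spec P gens p.1 ⟨((v⁻¹ : F) : X), hC1⟩ hmem2]
        show (FreeGroup.of p.1)⁻¹ • ((v⁻¹ : F) : X) = _
        rw [hsm]
      · rw [SemidirectProduct.mul_left]
        simp only [mk_left, mk_right]
        rw [Pi.mul_apply, ih2, actP_apply, ihSymm]
        simp only [rho]
        have hcond : (FreeGroup.of p.1)⁻¹ •
            ((⟨((v⁻¹ : F) : X), hC1⟩ : CT P gens) : X) ∈ C P gens := by
          rw [hval]
          exact hmem2
        rw [dif_pos hcond]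
        rw [hsm]
        group

lemma gen_fix (w : F) (hw : w ∈ gens) (hwP : w ∈ P) :
    (Phi P gens w).right (c0 P gens) = c0 P gens ∧ (Phi P gens w).left (c0 P gens) = w := by
  obtain ⟨t1, t2⟩ := tele P gens w hw w.toWord.length le_rfl
  rw [List.take_length, FreeGroup.mk_toWord] at t1 t2
  have hco : ((w⁻¹ : F) : X) = x0 P := (mem_iff P w⁻¹).mp (inv_mem hwP)
  constructor
  · have hfix : ((Phi P gens w).right)⁻¹ (c0 P gens) = c0 P gens := by
      apply Subtype.ext
      rw [t1, hco]
      rfl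
    have := congrArg ((Phi P gens w).right) hfix
    rw [Equiv.Perm.inv_def, Equiv.apply_symm_apply] at this
    exact this.symm
  · rw [t2, hco, u_x0, mul_one]

/-- the fixed-point/telescoping subgroup -/
def SG : Subgroup (FreeGroup (Fin n)) where
  carrier := {g | (Phi P gens g).right (c0 P gens) = c0 P gens ∧
    (Phi P gens g).left (c0 P gens) = g}
  one_mem' := by
    constructor
    · rw [_root_.map_one, SemidirectProduct.one_right]; rfl
    · rw [_root_.map_one, SemidirectProduct.one_left]; rfl
  mul_mem' := by
    rintro a b ⟨ha1, ha2⟩ ⟨hb1, hb2⟩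
    have hsymm : ((Phi P gens a).right).symm (c0 P gens) = c0 P gens := by
      rw [Equiv.symm_apply_eq, ha1]
    constructor
    · rw [_root_.map_mul, SemidirectProduct.mul_right, Equiv.Perm.mul_apply, hb1, ha1]
    · rw [_root_.map_mul, SemidirectProduct.mul_left, Pi.mul_apply, ha2, actP_apply, hsymm, hb2]
  inv_mem' := by
    rintro a ⟨ha1, ha2⟩
    have hsymm : ((Phi P gens a).right).symm (c0 P gens) = c0 P gens := by
      rw [Equiv.symm_apply_eq, ha1]
    constructor
    · rw [_root_.map_inv, SemidirectProduct.inv_right]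
      rw [Equiv.Perm.inv_def]
      exact hsymm
    · rw [_root_.map_inv, SemidirectProduct.inv_left, actP_apply, Pi.inv_apply]
      rw [show Equiv.symm (((Phi P gens a).right)⁻¹) = (Phi P gens a).right from by
        rw [Equiv.Perm.inv_def, Equiv.symm_symm]]
      rw [ha1, ha2]

include hgens in
/-- the membership characterization -/
theorem P_char (g : F) :
    g ∈ P ↔ ((Phi P gens g).right (c0 P gens) = c0 P gens ∧
      (Phi P gens g).left (c0 P gens) = g) := by
  constructor
  · intro hg
    have hle : Subgroup.closure (gens : Set (FreeGroup (Fin n))) ≤ SG P gens := by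
      rw [Subgroup.closure_le]
      intro w hw
      show (Phi P gens w).right (c0 P gens) = c0 P gens ∧
        (Phi P gens w).left (c0 P gens) = w
      exact gen_fix P gens w hw (hgens ▸ Subgroup.subset_closure hw)
    rw [← hgens] at hg
    exact hle hg
  · rintro ⟨h1, h2⟩
    rw [← h2]
    exact Phi_left_mem P gens g _


end Hall

/-! ### The slicing lemma -/

theorem slice_qa {G : Type} [Group G] (A : Set G) {Q : Type} [Fintype Q] [Group Q]
    (θ : G →* Q) (Ω : Set Q) (D : Type) [Fintype D] (μ : G → D → Gam)
    (hfib : ∀ (m : ℕ) (qb : Fin m → Q) (s : FreeGroup (Fin m)),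
      ∃ uw : FreeGroup (Fin m × D), ∀ gb : Fin m → G, θ ∘ gb = qb →
        (FreeGroup.lift gb s ∈ A ↔ (FreeGroup.lift qb s ∈ Ω ∧
          FreeGroup.lift (fun p => μ (gb p.1) p.2) uw = 1))) :
    QuasiAlgebraic G A := by
  intro m _ S
  have perslice : ∀ qb : Fin m → Q, ∃ T : Finset (FreeGroup (Fin m)), ↑T ⊆ S ∧
      ∀ gb : Fin m → G, θ ∘ gb = qb → (∀ t ∈ T, FreeGroup.lift gb t ∈ A) →
        ∀ s ∈ S, FreeGroup.lift gb s ∈ A := by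
    intro qb
    by_cases hbad : ∃ s ∈ S, FreeGroup.lift qb s ∉ Ω
    · obtain ⟨w, hwS, hw⟩ := hbad
      refine ⟨{w}, by simpa using hwS, ?_⟩
      intro gb hgb hT s hs
      exfalso
      have hwA := hT w (Finset.mem_singleton_self w)
      have := ((hfib m qb w).choose_spec gb hgb).mp hwA
      exact hw this.1
    · push_neg at hbad
      set uof : FreeGroup (Fin m) → FreeGroup (Fin m × D) := fun s => (hfib m qb s).choose
        with huof
      obtain ⟨T', hT'sub, hT'prop⟩ := ENG.EN_Gam (Fin m × D) (uof '' S)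
      have hsel : ∀ t ∈ T', ∃ s, s ∈ S ∧ uof s = t := by
        intro t ht
        obtain ⟨s, hs, he⟩ := hT'sub ht
        exact ⟨s, hs, he⟩
      choose sel hsel1 hsel2 using hsel
      refine ⟨T'.attach.image (fun t => sel t.1 t.2), ?_, ?_⟩
      · intro t ht
        obtain ⟨p, hp, rfl⟩ := Finset.mem_image.mp ht
        exact hsel1 _ _
      · intro gb hgb hT s hs
        have hdata : ∀ t ∈ T', FreeGroup.lift (fun p : Fin m × D => μ (gb p.1) p.2) t = 1 := by
          intro t ht
          have hmem : sel t ht ∈ T'.attach.image (fun t => sel t.1 t.2) :=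
            Finset.mem_image.mpr ⟨⟨t, ht⟩, Finset.mem_attach _ _, rfl⟩
          have hA := hT _ hmem
          have hres := ((hfib m qb (sel t ht)).choose_spec gb hgb).mp hA
          rw [← hsel2 t ht]
          exact hres.2
        have hall := hT'prop (fun p => μ (gb p.1) p.2) hdata (uof s) ⟨s, hs, rfl⟩
        exact ((hfib m qb s).choose_spec gb hgb).mpr ⟨hbad s hs, hall⟩
  choose Tsl hTsl1 hTsl2 using perslice
  refine ⟨(Finset.univ : Finset (Fin m → Q)).biUnion Tsl, ?_, ?_⟩
  · intro t ht
    obtain ⟨qb, _, hq⟩ := Finset.mem_biUnion.mp (Finset.mem_coe.mp ht)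
    exact hTsl1 qb hq
  · apply Set.Subset.antisymm
    · intro gb hgb s hs
      exact hTsl2 (θ ∘ gb) gb rfl
        (fun t ht => hgb t (Finset.mem_coe.mpr
          (Finset.mem_biUnion.mpr ⟨θ ∘ gb, Finset.mem_univ _, ht⟩))) s hs
    · intro gb hgb t ht
      obtain ⟨qb, _, hq⟩ := Finset.mem_biUnion.mp (Finset.mem_coe.mp ht)
      exact hgb t (hTsl1 qb hq)

/-! ### Main theorem -/

/-- Every finitely generated subgroup of a finitely generated free group is
quasi-algebraic as a subset. -/
theorem fg_subgroup_free_quasiAlgebraic (n : ℕ) (P : Subgroup (FreeGroup (Fin n)))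
    (hP : P.FG) :
    QuasiAlgebraic (FreeGroup (Fin n)) (P : Set (FreeGroup (Fin n))) := by
  classical
  obtain ⟨gens, hgens⟩ := hP
  obtain ⟨φ, hφ⟩ := PP.exists_embedding n
  apply slice_qa (P : Set (FreeGroup (Fin n)))
    (Q := Equiv.Perm (Hall.CT P gens))
    (θ := SemidirectProduct.rightHom.comp (Hall.Phi P gens))
    (Ω := {σ : Equiv.Perm (Hall.CT P gens) | σ (Hall.c0 P gens) = Hall.c0 P gens})
    (D := Option (Hall.CT P gens))
    (μ := fun g d => d.elim (φ g) (fun c => φ ((Hall.Phi P gens g).left c)))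
  intro m qb s
  let Lam : FreeGroup (Fin m) →*
      Wreath.Wr (Hall.CT P gens) (FreeGroup (Fin m × Option (Hall.CT P gens))) :=
    FreeGroup.lift (fun i => ⟨fun c => FreeGroup.of (i, some c), qb i⟩)
  refine ⟨(Lam s).left (Hall.c0 P gens) *
    (FreeGroup.map (fun i : Fin m => (i, (none : Option (Hall.CT P gens)))) s)⁻¹, ?_⟩
  intro gb hgb
  set κ : FreeGroup (Fin m × Option (Hall.CT P gens)) →* Gam :=
    FreeGroup.lift (fun p =>
      (p.2).elim (φ (gb p.1)) (fun c => φ ((Hall.Phi P gens (gb p.1)).left c)))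
    with hκ
  have hgb' : ∀ i, (Hall.Phi P gens (gb i)).right = qb i := by
    intro i
    exact congrFun hgb i
  have hnat : (Wreath.wrMap κ).comp Lam =
      (Wreath.wrMap φ).comp ((Hall.Phi P gens).comp (FreeGroup.lift gb)) := by
    apply FreeGroup.ext_hom
    intro i
    rw [MonoidHom.comp_apply, MonoidHom.comp_apply, MonoidHom.comp_apply]
    rw [show Lam (FreeGroup.of i) =
      (⟨fun c => FreeGroup.of (i, some c), qb i⟩ :
        Wreath.Wr (Hall.CT P gens) (FreeGroup (Fin m × Option (Hall.CT P gens)))) from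
      FreeGroup.lift_apply_of]
    rw [show (FreeGroup.lift gb) (FreeGroup.of i) = gb i from FreeGroup.lift_apply_of]
    apply SemidirectProduct.ext
    · funext c
      show κ (FreeGroup.of (i, some c)) = φ ((Hall.Phi P gens (gb i)).left c)
      rw [hκ, FreeGroup.lift_apply_of]
      rfl
    · show qb i = (Hall.Phi P gens (gb i)).right
      exact (hgb' i).symm
  rw [show ((FreeGroup.lift gb s ∈ (P : Set (FreeGroup (Fin n))))) ↔ FreeGroup.lift gb s ∈ P
    from Iff.rfl]
  rw [Hall.P_char P gens hgens (FreeGroup.lift gb s)]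
  have hright : (Hall.Phi P gens (FreeGroup.lift gb s)).right = FreeGroup.lift qb s := by
    have h1 : (SemidirectProduct.rightHom.comp (Hall.Phi P gens)).comp (FreeGroup.lift gb) =
        FreeGroup.lift qb := by
      apply FreeGroup.ext_hom
      intro i
      rw [MonoidHom.comp_apply, FreeGroup.lift_apply_of, FreeGroup.lift_apply_of]
      exact hgb' i
    exact DFunLike.congr_fun h1 s
  have hk1 : κ ((Lam s).left (Hall.c0 P gens)) =
      φ ((Hall.Phi P gens (FreeGroup.lift gb s)).left (Hall.c0 P gens)) := by
    have h2 := DFunLike.congr_fun hnat s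
    exact congrFun (congrArg SemidirectProduct.left h2) (Hall.c0 P gens)
  have hk2 : κ (FreeGroup.map (fun i : Fin m => (i, (none : Option (Hall.CT P gens)))) s) =
      φ (FreeGroup.lift gb s) := by
    have h1 : κ.comp (FreeGroup.map (fun i : Fin m => (i, (none : Option (Hall.CT P gens))))) =
        φ.comp (FreeGroup.lift gb) := by
      apply FreeGroup.ext_hom
      intro i
      rw [MonoidHom.comp_apply, MonoidHom.comp_apply, FreeGroup.lift_apply_of]
      show κ (FreeGroup.of (i, (none : Option (Hall.CT P gens)))) = φ (gb i)
      rw [hκ, FreeGroup.lift_apply_of]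
      rfl
    exact DFunLike.congr_fun h1 s
  constructor
  · rintro ⟨h1, h2⟩
    constructor
    · show FreeGroup.lift qb s (Hall.c0 P gens) = Hall.c0 P gens
      rw [← hright]
      exact h1
    · rw [map_mul, map_inv, hk1, hk2, h2]
      simp
  · rintro ⟨h1, h2⟩
    have h1' : (Hall.Phi P gens (FreeGroup.lift gb s)).right (Hall.c0 P gens) =
        Hall.c0 P gens := by
      rw [hright]
      exact h1
    rw [map_mul, map_inv, hk1, hk2] at h2
    have h2' : (Hall.Phi P gens (FreeGroup.lift gb s)).left (Hall.c0 P gens) =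
        FreeGroup.lift gb s := by
      apply hφ
      exact mul_inv_eq_one.mp h2
    exact ⟨h1', h2'⟩
end
end

section
/- Let H be a group, let K ⊆ H be a quasi-algebraic subset of H, let Q be a finite group, and let π : H^Q → H be the projection of the direct power H^Q = {functions Q → H} onto the coordinate of the identity element of Q. Then π^{-1}(K) is quasi-algebraic in H^Q. -/
/-- Evaluation at a point commutes with `FreeGroup.lift` into a direct power. -/
lemma lift_apply_eval {H : Type*} [Group H] {Q : Type*} {m : ℕ}
    (g : Fin m → (Q → H)) (q : Q) (s : FreeGroup (Fin m)) :
    FreeGroup.lift g s q = FreeGroup.lift (fun i => g i q) s := by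
  have h : (Pi.evalMonoidHom (fun _ : Q => H) q).comp (FreeGroup.lift g)
      = FreeGroup.lift (fun i => g i q) := by
    ext i
    simp
  exact DFunLike.congr_fun h s

/-- If `K` is quasi-algebraic in `H` and `Q` is a finite group, then the preimage of `K`
under the projection `H^Q → H` onto the coordinate of `1 ∈ Q` is quasi-algebraic in the
direct power `H^Q`. -/
theorem pi_preimage_quasiAlgebraic (H : Type*) [Group H] (K : Set H)
    (hK : QuasiAlgebraic H K) (Q : Type*) [Group Q] [Finite Q] :
    QuasiAlgebraic (Q → H) {f : Q → H | f 1 ∈ K} := by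
  intro m hm S
  obtain ⟨S₀, hsub, heq⟩ := hK m hm S
  refine ⟨S₀, hsub, ?_⟩
  have key : ∀ T : Set (FreeGroup (Fin m)),
      eqnSolutions {f : Q → H | f 1 ∈ K} T
        = (fun g : Fin m → (Q → H) => fun i => g i 1) ⁻¹' eqnSolutions K T := by
    intro T
    ext g
    simp only [eqnSolutions, Set.mem_setOf_eq, Set.mem_preimage]
    constructor
    · intro h s hs
      have := h s hs
      rwa [lift_apply_eval] at this
    · intro h s hs
      have := h s hs
      simpa [Set.mem_setOf_eq, lift_apply_eval] using this
  rw [key, key, heq]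
end

section
/- Let H be a group, let K ≤ H be a subgroup that is quasi-algebraic as a subset of H, and let N ≤ H be a subgroup of finite index. Then K ∩ N is quasi-algebraic as a subset of the group N. -/
/-- Evaluation of a word on a tuple in a subgroup commutes with the inclusion. -/
lemma lift_subtype_comm {H : Type*} [Group H] (N : Subgroup H) {m : ℕ}
    (g : Fin m → N) (s : FreeGroup (Fin m)) :
    ((FreeGroup.lift g s : N) : H) = FreeGroup.lift (fun i => (g i : H)) s := by
  have : (N.subtype.comp (FreeGroup.lift g)) = FreeGroup.lift (fun i => (g i : H)) := by
    apply FreeGroup.ext_hom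
    intro i
    simp
  exact DFunLike.congr_fun this s

/-- If `K ≤ H` is a quasi-algebraic subgroup and `N ≤ H` has finite index, then `K ∩ N`
is quasi-algebraic as a subset of the group `N`. -/
theorem quasiAlgebraic_inter_finiteIndex (H : Type*) [Group H] (K N : Subgroup H)
    (hK : QuasiAlgebraic H (K : Set H)) (hN : N.FiniteIndex) :
    QuasiAlgebraic N {x : N | (x : H) ∈ K} := by
  intro m hm S
  obtain ⟨S₀, hsub, heq⟩ := hK m hm S
  refine ⟨S₀, hsub, ?_⟩
  ext g
  have key : ∀ T : Set (FreeGroup (Fin m)),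
      g ∈ eqnSolutions {x : N | (x : H) ∈ K} T ↔
        (fun i => (g i : H)) ∈ eqnSolutions (K : Set H) T := by
    intro T
    simp only [eqnSolutions, Set.mem_setOf_eq, SetLike.mem_coe, lift_subtype_comm]

  rw [key, key, heq]
end

section
/- Let φ be an automorphism of the free group F_n such that φ^k = ad_a for some integer k ≥ 1 and some a ∈ F_n (i.e. φ has finite order in Out(F_n)). Then G = F_n ⋊_φ ℤ contains a subgroup of finite index that is isomorphic to the direct product F_n × ℤ. -/
/-- The mapping torus `F ⋊_φ ℤ` of an automorphism `φ` of `F`: the semidirect product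
in which the generator `1` of `ℤ` acts on `F` by `φ`. -/
abbrev MappingTorus (F : Type*) [Group F] (φ : MulAut F) :=
  SemidirectProduct F (Multiplicative ℤ) (zpowersHom (MulAut F) φ)

section Aux

variable {F : Type*} [Group F] {φ : MulAut F} {k : ℕ} {a : F}

/-- The central-ish element `(a⁻¹, k)` of the mapping torus. -/
def mtz (φ : MulAut F) (k : ℕ) (a : F) : MappingTorus F φ :=
  ⟨a⁻¹, Multiplicative.ofAdd (k : ℤ)⟩

lemma mtz_comm (hφ : φ ^ k = MulAut.conj a) (f : F) :
    Commute (SemidirectProduct.inl f) (mtz φ k a) := by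
  have hact : (zpowersHom (MulAut F) φ) (Multiplicative.ofAdd (k : ℤ)) f
      = a * f * a⁻¹ := by
    have : (zpowersHom (MulAut F) φ) (Multiplicative.ofAdd (k : ℤ)) = φ ^ (k : ℤ) := rfl
    rw [this, zpow_natCast, hφ]
    rfl
  show _ = _
  ext
  · simp only [SemidirectProduct.mul_left, SemidirectProduct.left_inl,
      SemidirectProduct.right_inl, map_one, MulAut.one_apply, mtz, hact]
    group
  · simp [mtz, SemidirectProduct.mul_right]

/-- The homomorphism `F × ℤ →* F ⋊_φ ℤ` sending `(f, m)` to `inl f * z^m`. -/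
noncomputable def mtHom (hφ : φ ^ k = MulAut.conj a) :
    F × Multiplicative ℤ →* MappingTorus F φ :=
  MonoidHom.noncommCoprod SemidirectProduct.inl
    (zpowersHom (MappingTorus F φ) (mtz φ k a))
    (fun f m => by
      simpa using (mtz_comm hφ f).zpow_right (Multiplicative.toAdd m))

lemma rightHom_mtz : SemidirectProduct.rightHom (mtz φ k a)
    = Multiplicative.ofAdd (k : ℤ) := rfl

lemma rightHom_mtHom (hφ : φ ^ k = MulAut.conj a) (p : F × Multiplicative ℤ) :
    SemidirectProduct.rightHom (mtHom hφ p)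
      = Multiplicative.ofAdd (Multiplicative.toAdd p.2 * (k : ℤ)) := by
  rcases p with ⟨f, m⟩
  simp only [mtHom, MonoidHom.noncommCoprod_apply, map_mul]
  rw [SemidirectProduct.rightHom_inl, one_mul]
  show SemidirectProduct.rightHom ((mtz φ k a) ^ (Multiplicative.toAdd m)) = _
  rw [map_zpow, rightHom_mtz, ← ofAdd_zsmul]
  norm_num [mul_comm]

lemma mtHom_injective (hk : 1 ≤ k) (hφ : φ ^ k = MulAut.conj a) :
    Function.Injective (mtHom hφ) := by
  rw [injective_iff_map_eq_one]
  rintro ⟨f, m⟩ h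
  have h2 : Multiplicative.toAdd m * (k : ℤ) = 0 := by
    have := congrArg SemidirectProduct.rightHom h
    rw [rightHom_mtHom, map_one] at this
    exact_mod_cast congrArg Multiplicative.toAdd this
  have hm : Multiplicative.toAdd m = 0 := by
    rcases mul_eq_zero.mp h2 with h | h
    · exact h
    · omega
  obtain rfl : m = 1 := by rw [← ofAdd_toAdd m, hm]; rfl
  have hf : f = 1 := by
    have h1 : (SemidirectProduct.inl f : MappingTorus F φ) = 1 := by
      simpa [mtHom, zpowersHom_apply] using h
    have := congrArg SemidirectProduct.left h1
    simpa using this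
  simp [hf]

end Aux

/-- If some positive power of `φ` is inner (finite order in `Out(F_n)`), then
`F_n ⋊_φ ℤ` contains a finite-index subgroup isomorphic to `F_n × ℤ`. -/
theorem finiteOrderOut_virtually_product (n : ℕ) (φ : MulAut (FreeGroup (Fin n)))
    (k : ℕ) (hk : 1 ≤ k) (a : FreeGroup (Fin n)) (hφ : φ ^ k = MulAut.conj a) :
    ∃ H : Subgroup (MappingTorus (FreeGroup (Fin n)) φ), H.FiniteIndex ∧
      Nonempty (H ≃* FreeGroup (Fin n) × Multiplicative ℤ) := by
  let F := FreeGroup (Fin n)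
  set ψ := mtHom hφ with hψ
  refine ⟨ψ.range, ?_, ⟨(MonoidHom.ofInjective (mtHom_injective hk hφ)).symm⟩⟩
  -- ψ.range contains the kernel of rightHom
  have hker : (SemidirectProduct.rightHom :
      MappingTorus F φ →* Multiplicative ℤ).ker ≤ ψ.range := by
    rw [← SemidirectProduct.range_inl_eq_ker_rightHom]
    rintro x ⟨f, rfl⟩
    exact ⟨(f, 1), by simp [ψ, mtHom]⟩
  have hsurj : Function.Surjective
      (SemidirectProduct.rightHom : MappingTorus F φ →* Multiplicative ℤ) :=
    SemidirectProduct.rightHom_surjective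
  have hindex : (ψ.range.map SemidirectProduct.rightHom).index = ψ.range.index :=
    Subgroup.index_map_eq _ hsurj hker
  -- the image contains zpowers (ofAdd k)
  have hle : Subgroup.zpowers (Multiplicative.ofAdd (k : ℤ)) ≤
      ψ.range.map SemidirectProduct.rightHom := by
    rw [Subgroup.zpowers_le]
    have hmem : mtz φ k a ∈ ψ.range := by
      refine ⟨(1, Multiplicative.ofAdd 1), ?_⟩
      show mtHom hφ (1, Multiplicative.ofAdd 1) = mtz φ k a
      simp [mtHom, zpowersHom_apply]
    exact ⟨mtz φ k a, hmem, rfl⟩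
  have hz : Subgroup.zpowers (Multiplicative.ofAdd (k : ℤ))
      = AddSubgroup.toSubgroup (AddSubgroup.zmultiples (k : ℤ)) := by
    ext x
    simp only [Subgroup.mem_zpowers_iff]
    constructor
    · rintro ⟨m, rfl⟩
      refine ⟨m, ?_⟩
      show m • (k:ℤ) = Multiplicative.toAdd (Multiplicative.ofAdd (k:ℤ) ^ m)
      rw [← ofAdd_zsmul]
      simp [smul_eq_mul, mul_comm]
    · rintro ⟨m, hm⟩
      refine ⟨m, ?_⟩
      rw [← ofAdd_zsmul]
      have := congrArg Multiplicative.ofAdd hm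
      simpa [smul_eq_mul, mul_comm] using this
  have hfin : (Subgroup.zpowers (Multiplicative.ofAdd (k : ℤ))).FiniteIndex := by
    rw [hz]
    constructor
    rw [AddSubgroup.index_toSubgroup, Int.index_zmultiples]
    omega
  have : (ψ.range.map SemidirectProduct.rightHom).FiniteIndex :=
    Subgroup.finiteIndex_of_le hle
  constructor
  rw [← hindex]
  exact this.index_ne_zero
end
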